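/- arXiv:1706.01456 — 4 statements merged into one kernel-verified Lean document; each statement's English description precedes it below -/
import Mathlib

section
/- Let u be continuously differentiable on the closure of Ω and suppose u(x,y,h) = φ for all (x,y) with x² + y² ≤ ρ², where φ is a real constant. Then ∫_Ω u² dx ≤ 4h² ( ∫_Ω |∇u|² dx + πρ²φ² ). -/
open MeasureTheory Real Set

/-- The open cylinder `Ω = {(x,y,z) : x² + y² < ρ², 0 < z < h}` in `ℝ³`. -/
def cyl (ρ h : ℝ) : Set (Fin 3 → ℝ) :=
  {x | (x 0) ^ 2 + (x 1) ^ 2 < ρ ^ 2 ∧ 0 < x 2 ∧ x 2 < h}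

/-- The `i`-th partial derivative of `f`, computed within the closed cylinder. -/
noncomputable def pdC (ρ h : ℝ) (i : Fin 3) (f : (Fin 3 → ℝ) → ℝ) (x : Fin 3 → ℝ) : ℝ :=
  fderivWithin ℝ f (closure (cyl ρ h)) x (Pi.single i 1)

theorem isOpen_cyl (ρ h : ℝ) : IsOpen (cyl ρ h) := by
  have h1 : IsOpen {x : Fin 3 → ℝ | (x 0) ^ 2 + (x 1) ^ 2 < ρ ^ 2} :=
    isOpen_lt (by continuity) continuous_const
  have h2 : IsOpen {x : Fin 3 → ℝ | 0 < x 2} := isOpen_lt continuous_const (continuous_apply 2)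
  have h3 : IsOpen {x : Fin 3 → ℝ | x 2 < h} := isOpen_lt (continuous_apply 2) continuous_const
  have : cyl ρ h = ({x : Fin 3 → ℝ | (x 0) ^ 2 + (x 1) ^ 2 < ρ ^ 2} ∩ {x : Fin 3 → ℝ | 0 < x 2}) ∩ {x : Fin 3 → ℝ | x 2 < h} := by
    ext x; simp [cyl, and_assoc]
  rw [this]; exact (h1.inter h2).inter h3

theorem convex_cyl (ρ h : ℝ) : Convex ℝ (cyl ρ h) := by
  intro x hx y hy α β hα hβ hαβ
  obtain ⟨hx1, hx2, hx3⟩ := hx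
  obtain ⟨hy1, hy2, hy3⟩ := hy
  refine ⟨?_, ?_, ?_⟩
  · simp only [Pi.add_apply, Pi.smul_apply, smul_eq_mul]
    rcases eq_or_lt_of_le hα with rfl|hα'
    · have hβ1 : β = 1 := by linarith
      subst hβ1; simpa using hy1
    · have hβ' : β = 1 - α := by linarith
      subst hβ'
      nlinarith [mul_pos hα' (sub_pos.mpr hx1), mul_nonneg hβ (sub_pos.mpr hy1).le,
        mul_nonneg (mul_nonneg hα'.le hβ) (sq_nonneg (x 0 - y 0)),
        mul_nonneg (mul_nonneg hα'.le hβ) (sq_nonneg (x 1 - y 1))]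
  · simp only [Pi.add_apply, Pi.smul_apply, smul_eq_mul]
    rcases eq_or_lt_of_le hα with rfl|hα' 
    · simp at hαβ; simpa [hαβ] using hy2
    · nlinarith
  · simp only [Pi.add_apply, Pi.smul_apply, smul_eq_mul]
    rcases eq_or_lt_of_le hα with rfl|hα'
    · simp at hαβ; simpa [hαβ] using hy3
    · nlinarith

theorem cont_gamma (a b : ℝ) : Continuous (fun t : ℝ => ![a, b, t]) := by
  apply continuous_pi
  intro i
  fin_cases i <;> simp
  exacts [continuous_const, continuous_const, continuous_id]

theorem mapsTo_seg {ρ h : ℝ} (hh : 0 < h) {a b : ℝ} (hab : a ^ 2 + b ^ 2 < ρ ^ 2) :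
    Set.MapsTo (fun t : ℝ => ![a, b, t]) (Icc 0 h) (closure (cyl ρ h)) := by
  have key : (fun t : ℝ => ![a, b, t]) '' (Icc 0 h) ⊆ closure (cyl ρ h) := by
    have h1 : (fun t : ℝ => ![a, b, t]) '' (Ioo 0 h) ⊆ cyl ρ h := by
      rintro _ ⟨t, ht, rfl⟩
      exact ⟨by simpa using hab, by simpa using ht.1, by simpa using ht.2⟩
    calc (fun t : ℝ => ![a, b, t]) '' (Icc 0 h)
        = (fun t : ℝ => ![a, b, t]) '' (closure (Ioo 0 h)) := by rw [closure_Ioo hh.ne]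
      _ ⊆ closure ((fun t : ℝ => ![a, b, t]) '' (Ioo 0 h)) :=
          image_closure_subset_closure_image (cont_gamma a b) 
      _ ⊆ closure (cyl ρ h) := closure_mono h1
  exact Set.mapsTo_iff_image_subset.mpr key

theorem bounded_cyl {ρ h : ℝ} (hρ : 0 < ρ) (hh : 0 < h) :
    Bornology.IsBounded (cyl ρ h) := by
  apply Bornology.IsBounded.subset (Metric.isBounded_closedBall (x := (0 : Fin 3 → ℝ)) (r := ρ + h))
  intro x hx
  obtain ⟨h1, h2, h3⟩ := hx
  simp only [Metric.mem_closedBall, dist_zero_right]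
  rw [pi_norm_le_iff_of_nonneg (by linarith)]
  intro i
  fin_cases i <;> simp [abs_le] <;> constructor <;> nlinarith [sq_nonneg (x 0), sq_nonneg (x 1)]

theorem isCompact_closure_cyl {ρ h : ℝ} (hρ : 0 < ρ) (hh : 0 < h) :
    IsCompact (closure (cyl ρ h)) :=
  (bounded_cyl hρ hh).isCompact_closure

theorem uniqueDiffOn_closure_cyl {ρ h : ℝ} (hρ : 0 < ρ) (hh : 0 < h) :
    UniqueDiffOn ℝ (closure (cyl ρ h)) := by
  apply uniqueDiffOn_convex (convex_cyl ρ h).closure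
  refine ⟨![0, 0, h/2], ?_⟩
  have hmem : ![0, 0, h/2] ∈ cyl ρ h := by
    refine ⟨by simpa using pow_pos hρ 2, by simpa using half_pos hh, by simpa using half_lt_self hh⟩
  exact (isOpen_cyl ρ h).subset_interior_iff.mpr subset_closure hmem

-- Cauchy-Schwarz for interval integral
theorem csq {a b : ℝ} (hab : a ≤ b) {f : ℝ → ℝ} (hf : ContinuousOn f (Icc a b)) :
    (∫ t in a..b, f t) ^ 2 ≤ (b - a) * ∫ t in a..b, (f t) ^ 2 := by
  have hint : IntervalIntegrable f volume a b :=
    (hf.mono (by rw [uIcc_of_le hab])).intervalIntegrable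
  have hint2 : IntervalIntegrable (fun t => (f t)^2) volume a b :=
    ((hf.pow 2).mono (by rw [uIcc_of_le hab])).intervalIntegrable
  rcases eq_or_lt_of_le hab with rfl | hab'
  · simp
  · set L : ℝ := b - a with hL
    have hL0 : 0 < L := by simp [hL]; linarith
    set c : ℝ := (∫ t in a..b, f t) / L with hc
    have key : 0 ≤ ∫ t in a..b, (f t - c)^2 :=
      intervalIntegral.integral_nonneg hab (fun t _ => sq_nonneg _)
    have expand : ∫ t in a..b, (f t - c)^2
        = (∫ t in a..b, (f t)^2) - 2*c*(∫ t in a..b, f t) + L * c^2 := by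
      have : ∀ t, (f t - c)^2 = (f t)^2 - (2*c) * f t + c^2 := by intro t; ring
      simp_rw [this]
      rw [intervalIntegral.integral_add, intervalIntegral.integral_sub,
        intervalIntegral.integral_const_mul, intervalIntegral.integral_const]
      · simp only [smul_eq_mul]; try ring
      · exact hint2
      · exact hint.const_mul _
      · exact (hint2.sub (hint.const_mul _))
      · exact intervalIntegrable_const
    rw [expand] at key
    have hcL : c * L = ∫ t in a..b, f t := by rw [hc, div_mul_cancel₀ _ hL0.ne']
    nlinarith [sq_nonneg c, key, hcL]

theorem pdC_contOn {ρ h : ℝ} (hρ : 0 < ρ) (hh : 0 < h) {u : (Fin 3 → ℝ) → ℝ}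
    (hu : ContDiffOn ℝ 1 u (closure (cyl ρ h))) (i : Fin 3) :
    ContinuousOn (pdC ρ h i u) (closure (cyl ρ h)) := by
  have h1 := hu.continuousOn_fderivWithin (uniqueDiffOn_closure_cyl hρ hh) le_rfl
  exact h1.clm_apply (continuousOn_const (c := Pi.single i 1))

theorem eta3 (p : Fin 3 → ℝ) : ![p 0, p 1, p 2] = p := by
  funext i; fin_cases i <;> simp

theorem gamma_hasDerivAt (a b t : ℝ) :
    HasDerivAt (fun s : ℝ => ![a, b, s]) (Pi.single (2 : Fin 3) (1 : ℝ)) t := by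
  rw [hasDerivAt_pi]
  intro i
  fin_cases i
  · simpa [Pi.single] using hasDerivAt_const t a
  · simpa [Pi.single] using hasDerivAt_const t b
  · simp [Pi.single]
    exact hasDerivAt_id' t

theorem pointwise_bound {ρ h : ℝ} (hρ : 0 < ρ) (hh : 0 < h) {u : (Fin 3 → ℝ) → ℝ} {φ : ℝ}
    (hu : ContDiffOn ℝ 1 u (closure (cyl ρ h)))
    (hbc : ∀ x y : ℝ, x ^ 2 + y ^ 2 ≤ ρ ^ 2 → u ![x, y, h] = φ) :
    ∀ p ∈ cyl ρ h, (u p) ^ 2 ≤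
      2 * φ ^ 2 + 2 * h * ∫ t in Ioo (0:ℝ) h, (pdC ρ h 2 u ![p 0, p 1, t]) ^ 2 := by
  intro p hp
  obtain ⟨hp1, hp2, hp3⟩ := hp
  set C := closure (cyl ρ h) with hC
  set γ : ℝ → (Fin 3 → ℝ) := fun t => ![p 0, p 1, t] with hγ
  set f' : ℝ → ℝ := fun t => pdC ρ h 2 u (γ t) with hf'
  have hmaps : Set.MapsTo γ (Icc 0 h) C := mapsTo_seg hh hp1
  have hγcont : Continuous γ := cont_gamma (p 0) (p 1)
  have hcont : ContinuousOn (u ∘ γ) (Icc 0 h) :=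
    hu.continuousOn.comp hγcont.continuousOn hmaps
  have hf'cont : ContinuousOn f' (Icc 0 h) :=
    (pdC_contOn hρ hh hu 2).comp hγcont.continuousOn hmaps
  have hsub : Icc (p 2) h ⊆ Icc 0 h := Icc_subset_Icc hp2.le le_rfl
  have hf'int : IntervalIntegrable f' volume (p 2) h :=
    ((hf'cont.mono hsub).mono (by rw [uIcc_of_le hp3.le])).intervalIntegrable
  have hderiv : ∀ t ∈ Ioo (p 2) h, HasDerivWithinAt (u ∘ γ) (f' t) (Ioi t) t := by
    intro t ht
    have htC : γ t ∈ C := hmaps ⟨by linarith [ht.1], ht.2.le⟩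
    have hfd : HasFDerivWithinAt u (fderivWithin ℝ u C (γ t)) C (γ t) :=
      (hu.differentiableOn one_ne_zero (γ t) htC).hasFDerivWithinAt
    have comp : HasDerivWithinAt (u ∘ γ)
        (fderivWithin ℝ u C (γ t) (Pi.single (2:Fin 3) (1:ℝ))) (Icc 0 h) t :=
      hfd.comp_hasDerivWithinAt t (gamma_hasDerivAt (p 0) (p 1) t).hasDerivWithinAt hmaps
    exact comp.mono_of_mem_nhdsWithin (Icc_mem_nhdsGT_of_mem ⟨by linarith [ht.1], ht.2⟩)
  have FTC : ∫ t in (p 2)..h, f' t = (u ∘ γ) h - (u ∘ γ) (p 2) :=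
    intervalIntegral.integral_eq_sub_of_hasDeriv_right_of_le hp3.le (hcont.mono hsub) hderiv hf'int
  have hend : (u ∘ γ) h = φ := hbc (p 0) (p 1) hp1.le
  have hstart : (u ∘ γ) (p 2) = u p := by
    simp only [Function.comp_apply, hγ, eta3]
  set I : ℝ := ∫ t in (p 2)..h, f' t with hI
  have hup : u p = φ - I := by rw [show I = _ from FTC, hend, hstart]; ring
  set K : ℝ := ∫ t in (p 2)..h, (f' t) ^ 2 with hK
  have hCS : I ^ 2 ≤ (h - p 2) * K := csq hp3.le (hf'cont.mono hsub)
  set J : ℝ := ∫ t in Ioo (0:ℝ) h, (f' t) ^ 2 with hJ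
  have hJint : IntegrableOn (fun t => (f' t) ^ 2) (Ioo 0 h) volume :=
    ((hf'cont.pow 2).integrableOn_compact isCompact_Icc).mono_set Ioo_subset_Icc_self
  have hKJ : K ≤ J := by
    rw [hK, intervalIntegral.integral_of_le hp3.le, integral_Ioc_eq_integral_Ioo]
    exact setIntegral_mono_set hJint
      (Filter.Eventually.of_forall fun t => sq_nonneg _)
      (HasSubset.Subset.eventuallyLE (Ioo_subset_Ioo hp2.le le_rfl))
  have hK0 : 0 ≤ K :=
    intervalIntegral.integral_nonneg hp3.le (fun t _ => sq_nonneg _)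
  have hJ0 : 0 ≤ J := hK0.trans hKJ
  have h2 : (h - p 2) * K ≤ h * J := by nlinarith
  have goalJ : (u p) ^ 2 ≤ 2 * φ ^ 2 + 2 * h * J := by
    rw [hup]; nlinarith [sq_nonneg (φ + I)]
  exact goalJ

noncomputable def Tmap : ℝ × (Fin 2 → ℝ) ≃ᵐ (Fin 3 → ℝ) :=
  (MeasurableEquiv.piFinSuccAbove (fun _ : Fin 3 => ℝ) 2).symm

theorem Tmap_apply (t : ℝ) (w : Fin 2 → ℝ) : Tmap (t, w) = ![w 0, w 1, t] := by
  have key : (MeasurableEquiv.piFinSuccAbove (fun _ : Fin 3 => ℝ) 2) ![w 0, w 1, t] = (t, w) := by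
    ext
    · simp [MeasurableEquiv.piFinSuccAbove, Fin.insertNthEquiv]
    · next j =>
        fin_cases j <;>
          simp [MeasurableEquiv.piFinSuccAbove, Fin.removeNth, Fin.insertNthEquiv,
            show (2:Fin 3).succAbove 0 = 0 from rfl, show (2:Fin 3).succAbove 1 = 1 from rfl]
  rw [Tmap, ← key, MeasurableEquiv.symm_apply_apply]

def disk (ρ : ℝ) : Set (Fin 2 → ℝ) := {w | (w 0) ^ 2 + (w 1) ^ 2 < ρ ^ 2}

theorem measurableSet_disk (ρ : ℝ) : MeasurableSet (disk ρ) :=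
  (isOpen_lt (by continuity) continuous_const).measurableSet

theorem Tmap_preimage (ρ h : ℝ) : ⇑Tmap ⁻¹' (cyl ρ h) = Ioo 0 h ×ˢ disk ρ := by
  ext ⟨t, w⟩
  simp only [Set.mem_preimage, Tmap_apply, cyl, disk, Set.mem_setOf_eq, Set.mem_prod, mem_Ioo,
    Matrix.cons_val_zero, Matrix.cons_val_one, Matrix.head_cons, Matrix.cons_val_two,
    Matrix.tail_cons]
  tauto

theorem Tmap_mp : MeasurePreserving (⇑Tmap) volume volume :=
  (volume_preserving_piFinSuccAbove (fun _ : Fin 3 => ℝ) 2).symm _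

theorem Tmap_restrict (ρ h : ℝ) : MeasurePreserving (⇑Tmap)
    ((volume.restrict (Ioo 0 h)).prod (volume.restrict (disk ρ)))
    (volume.restrict (cyl ρ h)) := by
  have h1 := Tmap_mp.restrict_preimage (isOpen_cyl ρ h).measurableSet
  rw [Tmap_preimage] at h1
  rwa [Measure.prod_restrict, ← Measure.volume_eq_prod]

theorem volume_disk {ρ : ℝ} (hρ : 0 < ρ) :
    volume (disk ρ) = ENNReal.ofReal (π * ρ ^ 2) := by
  have F := EuclideanSpace.volume_preserving_symm_measurableEquiv_toLp (Fin 2)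
  have hpre : ⇑(MeasurableEquiv.toLp 2 (Fin 2 → ℝ)).symm ⁻¹' (disk ρ)
      = Metric.ball (0 : EuclideanSpace ℝ (Fin 2)) ρ := by
    rw [EuclideanSpace.ball_zero_eq _ hρ.le]
    ext x
    simp [disk, Fin.sum_univ_two, MeasurableEquiv.coe_toLp_symm]
  have h1 := F.measure_preimage (measurableSet_disk ρ).nullMeasurableSet
  rw [hpre] at h1
  rw [← h1, EuclideanSpace.volume_ball]
  simp only [Fintype.card_fin]
  rw [show ((2:ℕ):ℝ)/2 + 1 = 2 by norm_num, Real.Gamma_two]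
  rw [sq_sqrt pi_pos.le]
  rw [← ENNReal.ofReal_pow hρ.le, ← ENNReal.ofReal_mul (by positivity)]
  ring_nf

theorem volume_cyl {ρ h : ℝ} (hρ : 0 < ρ) (hh : 0 < h) :
    volume (cyl ρ h) = ENNReal.ofReal (π * ρ ^ 2 * h) := by
  have h1 := Tmap_mp.measure_preimage (s := cyl ρ h)
    (isOpen_cyl ρ h).measurableSet.nullMeasurableSet
  rw [Tmap_preimage] at h1
  rw [← h1, Measure.volume_eq_prod, Measure.prod_prod, Real.volume_Ioo, volume_disk hρ]
  rw [← ENNReal.ofReal_mul (by linarith)]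
  ring_nf


set_option maxHeartbeats 1000000 in
/-- If `u ∈ C¹(closure Ω)` and `u(x,y,h) = φ` for all `x² + y² ≤ ρ²`,
then `∫_Ω u² ≤ 4h² ( ∫_Ω |∇u|² + πρ²φ² )`. -/
theorem friedrichs_type_estimate_cylinder (ρ h : ℝ) (hρ : 0 < ρ) (hh : 1 / 2 < h)
    (u : (Fin 3 → ℝ) → ℝ) (φ : ℝ)
    (hu : ContDiffOn ℝ 1 u (closure (cyl ρ h)))
    (hbc : ∀ x y : ℝ, x ^ 2 + y ^ 2 ≤ ρ ^ 2 → u ![x, y, h] = φ) :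
    (∫ x in cyl ρ h, (u x) ^ 2) ≤
      4 * h ^ 2 * ((∫ x in cyl ρ h, ∑ i, (pdC ρ h i u x) ^ 2) + π * ρ ^ 2 * φ ^ 2) := by
  have hh0 : 0 < h := by linarith
  set C := closure (cyl ρ h) with hCdef
  set g : (Fin 3 → ℝ) → ℝ := fun x => (pdC ρ h 2 u x) ^ 2 with hgdef
  set S : (Fin 3 → ℝ) → ℝ := fun x => ∑ i, (pdC ρ h i u x) ^ 2 with hSdef
  have hInt : ∀ {f : (Fin 3 → ℝ) → ℝ}, ContinuousOn f C → IntegrableOn f (cyl ρ h) := by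
    intro f hf
    exact (hf.integrableOn_compact (isCompact_closure_cyl hρ hh0)).mono_set subset_closure
  have hgcont : ContinuousOn g C := (pdC_contOn hρ hh0 hu 2).pow 2
  have hScont : ContinuousOn S C := by
    apply continuousOn_finset_sum
    intro i _
    exact (pdC_contOn hρ hh0 hu i).pow 2
  have hg : IntegrableOn g (cyl ρ h) := hInt hgcont
  have hS : IntegrableOn S (cyl ρ h) := hInt hScont
  have hu2 : IntegrableOn (fun x => (u x) ^ 2) (cyl ρ h) := hInt (hu.continuousOn.pow 2)
  have hmeas : MeasurableSet (cyl ρ h) := (isOpen_cyl ρ h).measurableSet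
  set A : ℝ := ∫ x in cyl ρ h, g x with hAdef
  set B : ℝ := ∫ x in cyl ρ h, S x with hBdef
  have hA0 : 0 ≤ A := setIntegral_nonneg hmeas fun x _ => sq_nonneg _
  have hAB : A ≤ B := by
    apply setIntegral_mono_on hg hS hmeas
    intro x _
    exact Finset.single_le_sum (f := fun i => (pdC ρ h i u x) ^ 2)
      (fun i _ => sq_nonneg _) (Finset.mem_univ 2)
  -- measures
  set μ1 : Measure ℝ := volume.restrict (Ioo 0 h) with hμ1
  set μ2 : Measure (Fin 2 → ℝ) := volume.restrict (disk ρ) with hμ2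
  haveI : IsFiniteMeasure μ1 := by
    constructor
    rw [hμ1, Measure.restrict_apply_univ, Real.volume_Ioo]
    exact ENNReal.ofReal_lt_top
  haveI : IsFiniteMeasure μ2 := by
    constructor
    rw [hμ2, Measure.restrict_apply_univ, volume_disk hρ]
    exact ENNReal.ofReal_lt_top
  set k : ℝ × (Fin 2 → ℝ) → ℝ := fun z => g (Tmap z) with hkdef
  have hk : Integrable k (μ1.prod μ2) :=
    ((Tmap_restrict ρ h).integrable_comp_emb Tmap.measurableEmbedding).mpr hg
  set G' : (Fin 2 → ℝ) → ℝ := fun w => ∫ t, k (t, w) ∂μ1 with hG'def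
  have hG'int : Integrable G' μ2 := hk.integral_prod_right
  have hG'eq : ∫ w, G' w ∂μ2 = A := by
    rw [hG'def]
    rw [← MeasureTheory.integral_prod_symm k hk]
    exact (Tmap_restrict ρ h).integral_comp Tmap.measurableEmbedding g
  set H : (Fin 3 → ℝ) → ℝ := fun x => ∫ t in Ioo (0:ℝ) h, g ![x 0, x 1, t] with hHdef
  have key : ∀ z : ℝ × (Fin 2 → ℝ), H (Tmap z) = G' z.2 := by
    rintro ⟨t, w⟩
    rw [hHdef, hG'def]
    simp only [Tmap_apply]
    apply setIntegral_congr_fun measurableSet_Ioo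
    intro s _
    simp [hkdef, Tmap_apply]
  have hHT : Integrable (fun z : ℝ × (Fin 2 → ℝ) => G' z.2) (μ1.prod μ2) := by
    rw [integrable_prod_iff' hG'int.aestronglyMeasurable.comp_snd]
    constructor
    · exact Filter.Eventually.of_forall fun w =>
        show Integrable (fun _ : ℝ => G' w) μ1 from integrable_const _
    · have hb : Integrable (fun w => (μ1 Set.univ).toReal * ‖G' w‖) μ2 := hG'int.norm.const_mul _
      simpa [integral_const, smul_eq_mul, measureReal_def] using hb
  have hH : IntegrableOn H (cyl ρ h) := by
    apply ((Tmap_restrict ρ h).integrable_comp_emb Tmap.measurableEmbedding).mp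
    have heq : H ∘ ⇑Tmap = fun z : ℝ × (Fin 2 → ℝ) => G' z.2 := funext key
    rw [heq]; exact hHT
  have intH : ∫ x in cyl ρ h, H x = h * A := by
    rw [← (Tmap_restrict ρ h).integral_comp Tmap.measurableEmbedding H]
    simp only [key]
    rw [MeasureTheory.integral_prod _ hHT]
    simp only []
    rw [hG'eq]
    rw [integral_const, hμ1, measureReal_def, Measure.restrict_apply_univ, Real.volume_Ioo, sub_zero,
      ENNReal.toReal_ofReal hh0.le, smul_eq_mul]
  have hvol : volume (cyl ρ h) < ⊤ := by
    rw [volume_cyl hρ hh0]; exact ENNReal.ofReal_lt_top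
  have hconst : IntegrableOn (fun _ : Fin 3 → ℝ => 2 * φ ^ 2) (cyl ρ h) :=
    integrableOn_const hvol.ne
  have hmono : (∫ x in cyl ρ h, (u x) ^ 2) ≤ ∫ x in cyl ρ h, (2 * φ ^ 2 + 2 * h * H x) := by
    apply setIntegral_mono_on hu2 (hconst.add (hH.const_mul (2 * h))) hmeas
    intro x hx
    exact pointwise_bound hρ hh0 hu hbc x hx
  have hrhs : ∫ x in cyl ρ h, (2 * φ ^ 2 + 2 * h * H x)
      = 2 * φ ^ 2 * (π * ρ ^ 2 * h) + 2 * h * (h * A) := by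
    rw [integral_add hconst (hH.const_mul (2 * h))]
    have h2 : ∫ a in cyl ρ h, 2 * h * H a = 2 * h * ∫ a in cyl ρ h, H a :=
      integral_const_mul (2 * h) H
    rw [h2, intH, setIntegral_const, measureReal_def, volume_cyl hρ hh0,
      ENNReal.toReal_ofReal (by positivity), smul_eq_mul]
    ring
  have hchain : (∫ x in cyl ρ h, (u x) ^ 2)
      ≤ 2 * φ ^ 2 * (π * ρ ^ 2 * h) + 2 * h * (h * A) := by rw [← hrhs]; exact hmono
  have hπ : (0:ℝ) ≤ π * ρ ^ 2 * φ ^ 2 := by positivity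
  have h4A : 4 * h ^ 2 * A ≤ 4 * h ^ 2 * B :=
    mul_le_mul_of_nonneg_left hAB (by positivity)
  nlinarith [mul_nonneg (mul_nonneg (by linarith : (0:ℝ) ≤ 2*h - 1) hh0.le) hπ,
    mul_nonneg hA0 (sq_nonneg h)]
end

section
/- Let h > 1/2 and let u : [0,h] → ℝ be continuously differentiable. Then ∫₀^h u(z)² dz ≤ 4h² ( ∫₀^h u'(z)² dz + u(h)² ). -/
/-- Cauchy–Schwarz for interval integrals of continuous functions. -/
lemma sq_intervalIntegral_le {a b : ℝ} (hab : a ≤ b) {f : ℝ → ℝ}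
    (hf : ContinuousOn f (Set.Icc a b)) :
    (∫ x in a..b, f x) ^ 2 ≤ (b - a) * ∫ x in a..b, (f x) ^ 2 := by
  rcases eq_or_lt_of_le hab with rfl | hlt
  · simp
  have hba : 0 < b - a := sub_pos.2 hlt
  have hf' : ContinuousOn f (Set.uIcc a b) := by rwa [Set.uIcc_of_le hab]
  have h1 : IntervalIntegrable f MeasureTheory.volume a b := hf'.intervalIntegrable
  have h2 : IntervalIntegrable (fun x => (f x) ^ 2) MeasureTheory.volume a b :=
    (hf'.pow 2).intervalIntegrable
  set I := ∫ x in a..b, f x with hI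
  set c := I / (b - a) with hc
  have key : 0 ≤ ∫ x in a..b, (f x - c) ^ 2 :=
    intervalIntegral.integral_nonneg hab (fun x _ => sq_nonneg _)
  have expand : (∫ x in a..b, (f x - c) ^ 2)
      = (∫ x in a..b, (f x) ^ 2) - 2 * c * I + (b - a) * c ^ 2 := by
    have e : ∀ x, (f x - c) ^ 2 = (f x) ^ 2 - (2 * c) * f x + c ^ 2 := fun x => by ring
    simp_rw [e]
    rw [intervalIntegral.integral_add (h2.sub (h1.const_mul _))
        intervalIntegrable_const,
      intervalIntegral.integral_sub h2 (h1.const_mul _),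
      intervalIntegral.integral_const_mul, intervalIntegral.integral_const]
    simp only [smul_eq_mul]
    rfl
  rw [expand] at key
  have hc' : c * (b - a) = I := by
    rw [hc, div_mul_cancel₀ _ hba.ne']
  nlinarith [sq_nonneg I, sq_nonneg c, key, hc', hba]

/-- For `h > 1/2` and `u` continuously differentiable on `[0,h]`
(with derivative `u'`): `∫₀ʰ u² ≤ 4h² ( ∫₀ʰ (u')² + u(h)² )`. -/
theorem friedrichs_type_estimate (h : ℝ) (hh : 1 / 2 < h) (u u' : ℝ → ℝ)
    (hderiv : ∀ z ∈ Set.Icc (0 : ℝ) h, HasDerivAt u (u' z) z)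
    (hcont : ContinuousOn u' (Set.Icc (0 : ℝ) h)) :
    (∫ z in (0 : ℝ)..h, (u z) ^ 2) ≤
      4 * h ^ 2 * ((∫ z in (0 : ℝ)..h, (u' z) ^ 2) + (u h) ^ 2) := by
  have hpos : (0 : ℝ) < h := lt_trans (by norm_num) hh
  set A := ∫ z in (0 : ℝ)..h, (u' z) ^ 2 with hA
  set B := (u h) ^ 2 with hB
  have hA0 : 0 ≤ A :=
    intervalIntegral.integral_nonneg hpos.le (fun x _ => sq_nonneg _)
  have hB0 : 0 ≤ B := sq_nonneg _
  -- continuity of u on [0,h]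
  have hu_cont : ContinuousOn u (Set.Icc (0 : ℝ) h) := fun z hz =>
    (hderiv z hz).continuousAt.continuousWithinAt
  -- pointwise bound
  have hpt : ∀ z ∈ Set.Icc (0 : ℝ) h, (u z) ^ 2 ≤ 2 * h * A + 2 * B := by
    intro z hz
    have hsub : Set.Icc z h ⊆ Set.Icc (0 : ℝ) h := Set.Icc_subset_Icc hz.1 le_rfl
    have hcz : ContinuousOn u' (Set.Icc z h) := hcont.mono hsub
    have hcz' : ContinuousOn u' (Set.uIcc z h) := by rwa [Set.uIcc_of_le hz.2]
    -- FTC on [z,h]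
    have hftc : ∫ t in z..h, u' t = u h - u z := by
      apply intervalIntegral.integral_eq_sub_of_hasDerivAt
      · intro t ht
        rw [Set.uIcc_of_le hz.2] at ht
        exact hderiv t (hsub ht)
      · exact hcz'.intervalIntegrable
    -- Cauchy-Schwarz on [z,h]
    have hcs : (∫ t in z..h, u' t) ^ 2 ≤ (h - z) * ∫ t in z..h, (u' t) ^ 2 :=
      sq_intervalIntegral_le hz.2 hcz
    -- ∫ z..h (u')^2 ≤ A
    have hsq_int : IntervalIntegrable (fun t => (u' t) ^ 2) MeasureTheory.volume 0 z := by
      apply ContinuousOn.intervalIntegrable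
      rw [Set.uIcc_of_le hz.1]
      exact (hcont.mono (Set.Icc_subset_Icc le_rfl hz.2)).pow 2
    have hsq_int2 : IntervalIntegrable (fun t => (u' t) ^ 2) MeasureTheory.volume z h :=
      (hcz'.pow 2).intervalIntegrable
    have hsplit : (∫ t in (0 : ℝ)..z, (u' t) ^ 2) + (∫ t in z..h, (u' t) ^ 2) = A :=
      intervalIntegral.integral_add_adjacent_intervals hsq_int hsq_int2
    have hleft0 : 0 ≤ ∫ t in (0 : ℝ)..z, (u' t) ^ 2 :=
      intervalIntegral.integral_nonneg hz.1 (fun x _ => sq_nonneg _)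
    have hle : (∫ t in z..h, (u' t) ^ 2) ≤ A := by linarith
    have hright0 : 0 ≤ ∫ t in z..h, (u' t) ^ 2 :=
      intervalIntegral.integral_nonneg hz.2 (fun x _ => sq_nonneg _)
    have huz : u z = u h - ∫ t in z..h, u' t := by linarith [hftc]
    have hz2 : h - z ≤ h := by linarith [hz.1]
    have hzh : 0 ≤ h - z := by linarith [hz.2]
    have hJ : (∫ t in z..h, u' t) ^ 2 ≤ h * A :=
      le_trans hcs (le_trans (mul_le_mul_of_nonneg_right hz2 hright0)
        (mul_le_mul_of_nonneg_left hle hpos.le))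
    rw [huz]
    nlinarith [hJ, sq_nonneg (u h + ∫ t in z..h, u' t), hB0]
  -- integrate the pointwise bound
  have hu2_int : IntervalIntegrable (fun z => (u z) ^ 2) MeasureTheory.volume 0 h := by
    apply ContinuousOn.intervalIntegrable
    rw [Set.uIcc_of_le hpos.le]
    exact hu_cont.pow 2
  have hmono : (∫ z in (0 : ℝ)..h, (u z) ^ 2) ≤ ∫ _z in (0 : ℝ)..h, (2 * h * A + 2 * B) := by
    apply intervalIntegral.integral_mono_on hpos.le hu2_int
      intervalIntegrable_const
    intro x hx
    exact hpt x hx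
  have hconst : (∫ _z in (0 : ℝ)..h, (2 * h * A + 2 * B)) = h * (2 * h * A + 2 * B) := by
    rw [intervalIntegral.integral_const]
    simp [smul_eq_mul]
  rw [hconst] at hmono
  have k1 : 0 ≤ A * h ^ 2 := mul_nonneg hA0 (sq_nonneg h)
  have k2 : 0 ≤ B * h * (2 * h - 1) :=
    mul_nonneg (mul_nonneg hB0 hpos.le) (by linarith)
  nlinarith [hmono, k1, k2]
end

section
/- Let h > 1/2 and let u : [0,h] → ℝ be twice continuously differentiable with u(0) = 0. Set φ = u(h) and α = u'(h). Then ∫₀^h u'(z)² dz ≤ 2φα + φ² + 4h² ∫₀^h u''(z)² dz. -/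
open MeasureTheory intervalIntegral Set

set_option maxHeartbeats 1000000 in
/-- For `h > 1/2` and `u` twice continuously differentiable on `[0,h]`
(with first and second derivatives `u'`, `u''`) satisfying `u(0) = 0`, and with
`φ = u(h)`, `α = u'(h)`: `∫₀ʰ (u')² ≤ 2φα + φ² + 4h² ∫₀ʰ (u'')²`. -/
theorem gradient_estimate_1d (h : ℝ) (hh : 1 / 2 < h) (u u' u'' : ℝ → ℝ)
    (hderiv : ∀ z ∈ Set.Icc (0 : ℝ) h, HasDerivAt u (u' z) z)
    (hderiv' : ∀ z ∈ Set.Icc (0 : ℝ) h, HasDerivAt u' (u'' z) z)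
    (hcont : ContinuousOn u'' (Set.Icc (0 : ℝ) h))
    (hu0 : u 0 = 0) (φ α : ℝ) (hφ : φ = u h) (hα : α = u' h) :
    (∫ z in (0 : ℝ)..h, (u' z) ^ 2) ≤
      2 * φ * α + φ ^ 2 + 4 * h ^ 2 * (∫ z in (0 : ℝ)..h, (u'' z) ^ 2) := by
  have h0 : (0:ℝ) < h := by linarith
  have hcu : ContinuousOn u (Set.Icc 0 h) :=
    fun z hz => (hderiv z hz).continuousAt.continuousWithinAt
  have hcu' : ContinuousOn u' (Set.Icc 0 h) :=
    fun z hz => (hderiv' z hz).continuousAt.continuousWithinAt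
  -- interval integrability on subintervals
  have hsub : ∀ t ∈ Set.Icc (0:ℝ) h, Set.uIcc (0:ℝ) t ⊆ Set.Icc 0 h := by
    intro t ht
    rw [Set.uIcc_of_le ht.1]
    exact Set.Icc_subset_Icc le_rfl ht.2
  have hmem : h ∈ Set.Icc (0:ℝ) h := ⟨h0.le, le_rfl⟩
  have hint1 : ∀ t ∈ Set.Icc (0:ℝ) h,
      IntervalIntegrable (fun z => u' z ^ 2) volume 0 t := by
    intro t ht
    exact ((hcu'.mono (hsub t ht)).pow 2).intervalIntegrable
  have hint0 : ∀ t ∈ Set.Icc (0:ℝ) h,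
      IntervalIntegrable u' volume 0 t := by
    intro t ht
    exact (hcu'.mono (hsub t ht)).intervalIntegrable
  -- the primitive X t = ∫₀ᵗ u'²
  set X : ℝ → ℝ := fun t => ∫ z in (0:ℝ)..t, u' z ^ 2 with hX
  -- u t = ∫₀ᵗ u'
  have hftc : ∀ t ∈ Set.Icc (0:ℝ) h, (∫ z in (0:ℝ)..t, u' z) = u t := by
    intro t ht
    have := integral_eq_sub_of_hasDerivAt (f := u) (f' := u')
      (fun x hx => hderiv x (hsub t ht hx)) (hint0 t ht)
    rw [this, hu0, sub_zero]
  -- Cauchy–Schwarz / Poincaré pointwise: u t ^ 2 ≤ t * X t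
  have hCS : ∀ t ∈ Set.Icc (0:ℝ) h, u t ^ 2 ≤ t * X t := by
    set g : ℝ → ℝ := fun t => t * X t - u t ^ 2 with hg
    have hXcont : ContinuousOn X (Set.Icc 0 h) := by
      have hInt : IntegrableOn (fun z => u' z ^ 2) (Set.uIcc 0 h) volume := by
        rw [Set.uIcc_of_le h0.le]
        exact ContinuousOn.integrableOn_compact' isCompact_Icc measurableSet_Icc (hcu'.pow 2)
      have hc := intervalIntegral.continuousOn_primitive_interval (a := 0) (b := h) hInt
      rw [Set.uIcc_of_le h0.le] at hc
      exact hc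
    have hgcont : ContinuousOn g (Set.Icc 0 h) :=
      ((continuousOn_id.mul hXcont).sub (hcu.pow 2))
    have hgderiv : ∀ t ∈ Set.Ioo (0:ℝ) h,
        HasDerivAt g (X t + t * u' t ^ 2 - 2 * u t * u' t) t := by
      intro t ht
      have htIcc : t ∈ Set.Icc (0:ℝ) h := Set.Ioo_subset_Icc_self ht
      have hXd : HasDerivAt X (u' t ^ 2) t := by
        apply intervalIntegral.integral_hasDerivAt_right (hint1 t htIcc)
        · exact (ContinuousOn.stronglyMeasurableAtFilter isOpen_Ioo
            ((hcu'.pow 2).mono Set.Ioo_subset_Icc_self) t ht)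
        · exact ((hderiv' t htIcc).continuousAt.pow 2)
      have h1 : HasDerivAt (fun t => t * X t) (1 * X t + t * u' t ^ 2) t :=
        (hasDerivAt_id t).mul hXd
      have h2 : HasDerivAt (fun t => u t ^ 2) (2 * u t * u' t) t := by
        have := (hderiv t htIcc).pow 2
        simp [mul_comm, mul_assoc] at this ⊢
        exact this
      have := h1.sub h2
      simp only [one_mul] at this
      exact this
    have hgmono : MonotoneOn g (Set.Icc 0 h) := by
      apply monotoneOn_of_deriv_nonneg (convex_Icc 0 h) hgcont
      · intro t ht
        rw [interior_Icc] at ht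
        exact (hgderiv t ht).differentiableAt.differentiableWithinAt
      · intro t ht
        rw [interior_Icc] at ht
        rw [(hgderiv t ht).deriv]
        have htIcc : t ∈ Set.Icc (0:ℝ) h := Set.Ioo_subset_Icc_self ht
        -- X t + t * u' t ^2 - 2 u t u' t = ∫₀ᵗ (u' z - u' t)^2 ≥ 0
        have key : X t + t * u' t ^ 2 - 2 * u t * u' t
            = ∫ z in (0:ℝ)..t, (u' z - u' t) ^ 2 := by
          have e1 : ∀ z, (u' z - u' t) ^ 2
              = u' z ^ 2 - 2 * u' t * u' z + u' t ^ 2 := by intro z; ring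
          rw [intervalIntegral.integral_congr (fun z _ => e1 z)]
          rw [intervalIntegral.integral_add, intervalIntegral.integral_sub]
          · rw [intervalIntegral.integral_const_mul, intervalIntegral.integral_const,
              hftc t htIcc]
            simp [X, smul_eq_mul]
            ring
          · exact hint1 t htIcc
          · exact (hint0 t htIcc).const_mul _
          · exact (hint1 t htIcc).sub ((hint0 t htIcc).const_mul _)
          · exact intervalIntegrable_const
        rw [key]
        apply intervalIntegral.integral_nonneg ht.1.le
        intro z _; positivity
    intro t ht
    have := hgmono (Set.left_mem_Icc.2 h0.le) ht ht.1
    have hg0 : g 0 = 0 := by simp [g, X, hu0]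
    rw [hg0] at this
    simp only [g] at this
    linarith
  -- X t ≤ X h for t ∈ [0,h]
  have hXmono : ∀ t ∈ Set.Icc (0:ℝ) h, X t ≤ X h := by
    intro t ht
    apply intervalIntegral.integral_mono_interval le_rfl ht.1 ht.2
    · filter_upwards with z using by positivity
    · exact hint1 h hmem
  have hXnonneg : 0 ≤ X h :=
    intervalIntegral.integral_nonneg h0.le (fun z _ => by positivity)
  -- ∫ u² ≤ h² * X h
  have hintu2 : IntervalIntegrable (fun z => u z ^ 2) volume 0 h :=
    ((hcu.pow 2).mono (hsub h hmem)).intervalIntegrable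
  have hPoincare : (∫ z in (0:ℝ)..h, u z ^ 2) ≤ h ^ 2 * X h := by
    have : (∫ z in (0:ℝ)..h, u z ^ 2) ≤ ∫ z in (0:ℝ)..h, h * X h := by
      apply intervalIntegral.integral_mono_on h0.le hintu2 intervalIntegrable_const
      intro t ht
      calc u t ^ 2 ≤ t * X t := hCS t ht
        _ ≤ h * X h := by
            have h1 := hXmono t ht
            have h2 : 0 ≤ X t :=
              intervalIntegral.integral_nonneg ht.1 (fun z _ => by positivity)
            nlinarith [ht.1, ht.2]
    rw [intervalIntegral.integral_const, smul_eq_mul] at this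
    calc (∫ z in (0:ℝ)..h, u z ^ 2) ≤ (h - 0) * (h * X h) := this
      _ = h ^ 2 * X h := by ring
  -- integration by parts
  have huu'' : IntervalIntegrable (fun z => u z * u'' z) volume 0 h :=
    ((hcu.mono (hsub h hmem)).mul (hcont.mono (hsub h hmem))).intervalIntegrable
  have hintu''2 : IntervalIntegrable (fun z => u'' z ^ 2) volume 0 h :=
    ((hcont.pow 2).mono (hsub h hmem)).intervalIntegrable
  have hIBP : X h + (∫ z in (0:ℝ)..h, u z * u'' z) = φ * α := by
    have hd : ∀ x ∈ Set.uIcc (0:ℝ) h,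
        HasDerivAt (fun z => u z * u' z) (u' x ^ 2 + u x * u'' x) x := by
      intro x hx
      rw [Set.uIcc_of_le h0.le] at hx
      have := (hderiv x hx).mul (hderiv' x hx)
      exact this.congr_deriv (by ring)
    have hi : IntervalIntegrable (fun z => u' z ^ 2 + u z * u'' z) volume 0 h :=
      (hint1 h hmem).add huu''
    have := integral_eq_sub_of_hasDerivAt hd hi
    rw [intervalIntegral.integral_add (hint1 h hmem) huu''] at this
    rw [hu0] at this
    rw [hφ, hα]
    simpa [X] using this
  -- AM-GM bound on -∫ u u''
  have hAM : -(∫ z in (0:ℝ)..h, u z * u'' z)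
      ≤ (∫ z in (0:ℝ)..h, u z ^ 2) / (2 * h ^ 2)
        + h ^ 2 / 2 * (∫ z in (0:ℝ)..h, u'' z ^ 2) := by
    have step : (∫ z in (0:ℝ)..h, -(u z * u'' z))
        ≤ ∫ z in (0:ℝ)..h, (u z ^ 2 / (2 * h ^ 2) + h ^ 2 / 2 * u'' z ^ 2) := by
      apply intervalIntegral.integral_mono_on h0.le huu''.neg
        ((hintu2.div_const _).add (hintu''2.const_mul _))
      intro t _
      show -(u t * u'' t) ≤ u t ^ 2 / (2 * h ^ 2) + h ^ 2 / 2 * u'' t ^ 2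
      have hsq : 0 ≤ (u t + h ^ 2 * u'' t) ^ 2 := sq_nonneg _
      have hh2 : 0 < h ^ 2 := by positivity
      rw [div_add' _ _ _ (by positivity : (2:ℝ) * h ^ 2 ≠ 0), le_div_iff₀ (by positivity)]
      nlinarith
    rw [intervalIntegral.integral_neg] at step
    rw [intervalIntegral.integral_add (hintu2.div_const _) (hintu''2.const_mul _),
      intervalIntegral.integral_div, intervalIntegral.integral_const_mul] at step
    linarith
  -- combine
  set Y : ℝ := ∫ z in (0:ℝ)..h, u'' z ^ 2 with hY
  have hYnonneg : 0 ≤ Y :=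
    intervalIntegral.integral_nonneg h0.le (fun z _ => by positivity)
  have hh2 : (0:ℝ) < 2 * h ^ 2 := by positivity
  have hfin : (∫ z in (0:ℝ)..h, u z ^ 2) / (2 * h ^ 2) ≤ X h / 2 := by
    rw [div_le_iff₀ hh2]
    calc (∫ z in (0:ℝ)..h, u z ^ 2) ≤ h ^ 2 * X h := hPoincare
      _ = X h / 2 * (2 * h ^ 2) := by ring
  have hmain : X h ≤ 2 * φ * α + h ^ 2 * Y := by
    have : X h = φ * α - ∫ z in (0:ℝ)..h, u z * u'' z := by linarith
    have h2 : X h ≤ φ * α + (X h / 2 + h ^ 2 / 2 * Y) := by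
      rw [this]
      have := hAM
      have := hfin
      linarith
    linarith
  have : h ^ 2 * Y ≤ 4 * h ^ 2 * Y := by nlinarith
  have hphi2 : (0:ℝ) ≤ φ ^ 2 := sq_nonneg _
  calc (∫ z in (0:ℝ)..h, u' z ^ 2) = X h := rfl
    _ ≤ 2 * φ * α + h ^ 2 * Y := hmain
    _ ≤ 2 * φ * α + φ ^ 2 + 4 * h ^ 2 * Y := by linarith
end

section
/- Let u be twice continuously differentiable on the closure of Ω, let φ and α be real constants, and suppose u satisfies the boundary conditions (BC). Then πρ²α²/h ≤ ∫_Ω (Δu)² dx. -/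
open MeasureTheory Real

/-- The Laplacian of `f`, computed within the closed cylinder. -/
noncomputable def lapC (ρ h : ℝ) (f : (Fin 3 → ℝ) → ℝ) (x : Fin 3 → ℝ) : ℝ :=
  ∑ i, pdC ρ h i (pdC ρ h i f) x

/-- The boundary conditions (BC): `u = φ` and `∂u/∂z = α` on the top disc `z = h`;
`u = 0` and `∂u/∂z = 0` on the bottom disc `z = 0`; and vanishing normal derivative
`x ∂u/∂x + y ∂u/∂y = 0` on the lateral boundary `x² + y² = ρ²`, `0 ≤ z ≤ h`. -/
def BC (ρ h : ℝ) (u : (Fin 3 → ℝ) → ℝ) (φ α : ℝ) : Prop :=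
  (∀ x y : ℝ, x ^ 2 + y ^ 2 ≤ ρ ^ 2 →
      u ![x, y, h] = φ ∧ pdC ρ h 2 u ![x, y, h] = α ∧
      u ![x, y, 0] = 0 ∧ pdC ρ h 2 u ![x, y, 0] = 0) ∧
  (∀ x y z : ℝ, x ^ 2 + y ^ 2 = ρ ^ 2 → 0 ≤ z → z ≤ h →
      x * pdC ρ h 0 u ![x, y, z] + y * pdC ρ h 1 u ![x, y, z] = 0)

namespace LapAux

open Set

lemma isOpen_cyl (ρ h : ℝ) : IsOpen (cyl ρ h) := by
  have c0 : Continuous fun x : Fin 3 → ℝ => (x 0) ^ 2 + (x 1) ^ 2 :=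
    (((continuous_apply 0).pow 2).add ((continuous_apply 1).pow 2))
  have h1 : IsOpen {x : Fin 3 → ℝ | (x 0) ^ 2 + (x 1) ^ 2 < ρ ^ 2} :=
    isOpen_lt c0 continuous_const
  have h2 : IsOpen {x : Fin 3 → ℝ | 0 < x 2} := isOpen_lt continuous_const (continuous_apply 2)
  have h3 : IsOpen {x : Fin 3 → ℝ | x 2 < h} := isOpen_lt (continuous_apply 2) continuous_const
  exact h1.inter (h2.inter h3)

lemma convex_cyl (ρ h : ℝ) : Convex ℝ (cyl ρ h) := by
  rintro x ⟨hx1, hx2, hx3⟩ y ⟨hy1, hy2, hy3⟩ a b ha hb hab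
  have e0 : (a • x + b • y) 0 = a * x 0 + b * y 0 := rfl
  have e1 : (a • x + b • y) 1 = a * x 1 + b * y 1 := rfl
  have e2 : (a • x + b • y) 2 = a * x 2 + b * y 2 := rfl
  rcases eq_or_lt_of_le ha with rfl | ha'
  · have hb1 : b = 1 := by linarith
    subst hb1
    refine ⟨?_, ?_, ?_⟩ <;> simp only [e0, e1, e2] <;> nlinarith
  refine ⟨?_, ?_, ?_⟩
  · simp only [e0, e1]
    have hb' : b = 1 - a := by linarith
    subst hb'
    nlinarith [mul_lt_mul_of_pos_left hx1 ha', mul_le_mul_of_nonneg_left hy1.le hb,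
      mul_nonneg (mul_nonneg ha hb) (sq_nonneg (x 0 - y 0)),
      mul_nonneg (mul_nonneg ha hb) (sq_nonneg (x 1 - y 1))]
  · simp only [e2]
    nlinarith [mul_pos ha' hx2, mul_nonneg hb hy2.le]
  · simp only [e2]
    nlinarith [mul_lt_mul_of_pos_left hx3 ha', mul_le_mul_of_nonneg_left hy3.le hb]

lemma closure_cyl {ρ h : ℝ} (hρ : 0 < ρ) (hh : 0 < h) :
    closure (cyl ρ h) =
      {x : Fin 3 → ℝ | (x 0) ^ 2 + (x 1) ^ 2 ≤ ρ ^ 2 ∧ 0 ≤ x 2 ∧ x 2 ≤ h} := by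
  apply Subset.antisymm
  · apply closure_minimal
    · rintro x ⟨h1, h2, h3⟩; exact ⟨h1.le, h2.le, h3.le⟩
    · have c0 : Continuous fun x : Fin 3 → ℝ => (x 0) ^ 2 + (x 1) ^ 2 :=
        (((continuous_apply 0).pow 2).add ((continuous_apply 1).pow 2))
      exact (isClosed_le c0 continuous_const).inter
        ((isClosed_le continuous_const (continuous_apply 2)).inter
          (isClosed_le (continuous_apply 2) continuous_const))
  · rintro p ⟨hp1, hp2, hp3⟩
    set f : ℝ → Fin 3 → ℝ := fun t j => t * p j + (1 - t) * (if j = 2 then h / 2 else 0) with hf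
    have hf_cont : Continuous f := by
      refine continuous_pi fun j => ?_
      exact (continuous_id.mul continuous_const).add
        ((continuous_const.sub continuous_id).mul continuous_const)
    have hf1 : f 1 = p := by
      funext j; simp [hf]
    have htend : Filter.Tendsto f (nhdsWithin 1 (Iio 1)) (nhds p) := by
      rw [← hf1]
      exact (hf_cont.tendsto 1).mono_left nhdsWithin_le_nhds
    refine mem_closure_of_tendsto htend ?_
    filter_upwards [Ioo_mem_nhdsLT_of_mem (⟨zero_lt_one, le_refl (1:ℝ)⟩ : (1:ℝ) ∈ Ioc 0 1)]
      with t ht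
    obtain ⟨ht0, ht1⟩ := ht
    have e0 : f t 0 = t * p 0 := by simp [hf]
    have e1 : f t 1 = t * p 1 := by simp [hf]
    have e2 : f t 2 = t * p 2 + (1 - t) * (h / 2) := by simp [hf]
    refine ⟨?_, ?_, ?_⟩
    · rw [e0, e1]
      have h1 : t ^ 2 * ((p 0) ^ 2 + (p 1) ^ 2) ≤ t ^ 2 * ρ ^ 2 :=
        mul_le_mul_of_nonneg_left hp1 (sq_nonneg t)
      have h2 : t ^ 2 < 1 := by nlinarith
      nlinarith [sq_nonneg ρ, pow_pos hρ 2]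
    · rw [e2]
      nlinarith [mul_nonneg ht0.le hp2]
    · rw [e2]
      nlinarith [mul_le_mul_of_nonneg_left hp3 ht0.le]

lemma center_mem {ρ h : ℝ} (hρ : 0 < ρ) (hh : 0 < h) :
    (fun j : Fin 3 => if j = 2 then h / 2 else 0) ∈ cyl ρ h := by
  refine ⟨?_, ?_, ?_⟩ <;> simp <;> positivity

lemma uniqueDiffOn_K {ρ h : ℝ} (hρ : 0 < ρ) (hh : 0 < h) :
    UniqueDiffOn ℝ (closure (cyl ρ h)) := by
  refine uniqueDiffOn_convex (convex_cyl ρ h).closure ?_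
  refine ⟨_, (isOpen_cyl ρ h).subset_interior_iff.2 subset_closure (center_mem hρ hh)⟩

lemma compact_K {ρ h : ℝ} (hρ : 0 < ρ) (hh : 0 < h) :
    IsCompact (closure (cyl ρ h)) := by
  refine Bornology.IsBounded.isCompact_closure ?_
  rw [Metric.isBounded_iff_subset_closedBall 0]
  refine ⟨ρ + h, fun x hx => ?_⟩
  obtain ⟨h1, h2, h3⟩ := hx
  have hx0 : |x 0| ≤ ρ + h := by
    rw [abs_le]; constructor <;> nlinarith [sq_nonneg (x 1)]
  have hx1 : |x 1| ≤ ρ + h := by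
    rw [abs_le]; constructor <;> nlinarith [sq_nonneg (x 0)]
  have hx2 : |x 2| ≤ ρ + h := by
    rw [abs_le]; constructor <;> nlinarith
  simp only [Metric.mem_closedBall, dist_zero_right]
  refine (pi_norm_le_iff_of_nonneg (by positivity)).2 fun i => ?_
  fin_cases i <;> simpa [Real.norm_eq_abs]

lemma mem_K_iff {ρ h : ℝ} (hρ : 0 < ρ) (hh : 0 < h) (a b c : ℝ) :
    (![a, b, c] : Fin 3 → ℝ) ∈ closure (cyl ρ h) ↔ (a ^ 2 + b ^ 2 ≤ ρ ^ 2 ∧ 0 ≤ c ∧ c ≤ h) := by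
  rw [closure_cyl hρ hh]
  simp [Matrix.cons_val_zero, Matrix.cons_val_one]


/-! ### Measurable equivalences -/

noncomputable def Meq (i : Fin 3) : (Fin 3 → ℝ) ≃ᵐ ℝ × ℝ × ℝ :=
  (MeasurableEquiv.piFinSuccAbove (fun _ => ℝ) i).trans
    ((MeasurableEquiv.refl ℝ).prodCongr (MeasurableEquiv.finTwoArrow))

lemma Meq0_apply (x : Fin 3 → ℝ) : Meq 0 x = (x 0, x 1, x 2) := rfl
lemma Meq1_apply (x : Fin 3 → ℝ) : Meq 1 x = (x 1, x 0, x 2) := rfl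
lemma Meq2_apply (x : Fin 3 → ℝ) : Meq 2 x = (x 2, x 0, x 1) := rfl

lemma Meq_mp (i : Fin 3) : MeasurePreserving (Meq i) := by
  have h1 := MeasureTheory.volume_preserving_piFinSuccAbove (fun _ : Fin 3 => ℝ) i
  have h2 : MeasurePreserving
      ((MeasurableEquiv.refl ℝ).prodCongr (MeasurableEquiv.finTwoArrow) :
        ℝ × (Fin 2 → ℝ) ≃ᵐ ℝ × ℝ × ℝ) := by
    have := (MeasurePreserving.id (volume : Measure ℝ)).prod
      (volume_preserving_finTwoArrow ℝ)
    convert this using 2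
    · rfl
    · exact Measure.volume_eq_prod _ _
    · exact Measure.volume_eq_prod _ _
  exact h2.comp h1

lemma Meq0_symm (a b c : ℝ) : (Meq 0).symm (a, b, c) = ![a, b, c] := by
  apply (Meq 0).injective
  rw [(Meq 0).apply_symm_apply, Meq0_apply]
  simp

lemma Meq1_symm (a b c : ℝ) : (Meq 1).symm (b, a, c) = ![a, b, c] := by
  apply (Meq 1).injective
  rw [(Meq 1).apply_symm_apply, Meq1_apply]
  simp

lemma Meq2_symm (a b c : ℝ) : (Meq 2).symm (c, a, b) = ![a, b, c] := by
  apply (Meq 2).injective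
  rw [(Meq 2).apply_symm_apply, Meq2_apply]
  simp

lemma transport {X : Type*} [MeasurableSpace X] (e : (Fin 3 → ℝ) ≃ᵐ X)
    {ν : Measure X} (he : MeasurePreserving e volume ν) (F : (Fin 3 → ℝ) → ℝ) (s : Set (Fin 3 → ℝ)) :
    ∫ x in s, F x = ∫ p in e '' s, F (e.symm p) ∂ν := by
  rw [he.setIntegral_image_emb e.measurableEmbedding (fun p => F (e.symm p)) s]
  simp only [MeasurableEquiv.symm_apply_apply]

lemma transport_int {X : Type*} [MeasurableSpace X] (e : (Fin 3 → ℝ) ≃ᵐ X)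
    {ν : Measure X} (he : MeasurePreserving e volume ν) {F : (Fin 3 → ℝ) → ℝ}
    {s : Set (Fin 3 → ℝ)} (hF : IntegrableOn F s) :
    IntegrableOn (fun p => F (e.symm p)) (e '' s) ν := by
  have h1 := (he.symm e).integrableOn_comp_preimage e.symm.measurableEmbedding
    (f := F) (s := s)
  have h2 : e.symm ⁻¹' s = e '' s := by
    ext p
    simp [MeasurableEquiv.image_eq_preimage_symm]
  rw [← h2]
  exact h1.2 hF

/-! ### Derivative lemmas -/

lemma contDiffOn_pdC {ρ h : ℝ} (hρ : 0 < ρ) (hh : 0 < h) {u : (Fin 3 → ℝ) → ℝ}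
    (hu : ContDiffOn ℝ 2 u (closure (cyl ρ h))) (i : Fin 3) :
    ContDiffOn ℝ 1 (pdC ρ h i u) (closure (cyl ρ h)) := by
  have hK := uniqueDiffOn_K hρ hh
  have h1 : ContDiffOn ℝ 1 (fderivWithin ℝ u (closure (cyl ρ h))) (closure (cyl ρ h)) :=
    hu.fderivWithin hK (by norm_num)
  exact h1.clm_apply contDiffOn_const

lemma continuousOn_pdC {ρ h : ℝ} (hρ : 0 < ρ) (hh : 0 < h) {f : (Fin 3 → ℝ) → ℝ}
    (hf : ContDiffOn ℝ 1 f (closure (cyl ρ h))) (i : Fin 3) :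
    ContinuousOn (pdC ρ h i f) (closure (cyl ρ h)) := by
  have hK := uniqueDiffOn_K hρ hh
  have h2 : ContinuousOn (fderivWithin ℝ f (closure (cyl ρ h))) (closure (cyl ρ h)) :=
    hf.continuousOn_fderivWithin hK le_rfl
  exact (ContinuousLinearMap.apply ℝ ℝ (Pi.single i (1:ℝ))).continuous.comp_continuousOn h2

lemma hasDerivWithinAt_line {ρ h : ℝ} (hρ : 0 < ρ) (hh : 0 < h) {f : (Fin 3 → ℝ) → ℝ}
    (hf : ContDiffOn ℝ 1 f (closure (cyl ρ h))) (i : Fin 3) (p : Fin 3 → ℝ) (s : Set ℝ) {t : ℝ}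
    (ht : Function.update p i t ∈ closure (cyl ρ h))
    (hmaps : ∀ r ∈ s, Function.update p i r ∈ closure (cyl ρ h)) :
    HasDerivWithinAt (fun r => f (Function.update p i r))
      (pdC ρ h i f (Function.update p i t)) s t := by
  have hL : HasDerivAt (fun r => Function.update p i r) (Pi.single i (1:ℝ)) t := by
    rw [hasDerivAt_pi]
    intro j
    rcases eq_or_ne j i with rfl | hj
    · simpa [Function.update_self] using (hasDerivAt_id' t)
    · simpa [Function.update_of_ne hj, Pi.single_eq_of_ne hj] using
        (hasDerivAt_const t (p j))
  have hfd : HasFDerivWithinAt f (fderivWithin ℝ f (closure (cyl ρ h)) (Function.update p i t))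
      (closure (cyl ρ h)) (Function.update p i t) :=
    (hf.differentiableOn one_ne_zero _ ht).hasFDerivWithinAt
  exact hfd.comp_hasDerivWithinAt t (hL.hasDerivWithinAt) hmaps

lemma ftc_line {ρ h : ℝ} (hρ : 0 < ρ) (hh : 0 < h) {f : (Fin 3 → ℝ) → ℝ}
    (hf : ContDiffOn ℝ 1 f (closure (cyl ρ h))) (i : Fin 3) (p : Fin 3 → ℝ) {a b : ℝ}
    (hab : a ≤ b)
    (hmaps : ∀ r ∈ Icc a b, Function.update p i r ∈ closure (cyl ρ h)) :
    ∫ r in a..b, pdC ρ h i f (Function.update p i r) =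
      f (Function.update p i b) - f (Function.update p i a) := by
  have hK := uniqueDiffOn_K hρ hh
  have hline_cont : Continuous fun r : ℝ => Function.update p i r := by
    refine continuous_pi fun j => ?_
    rcases eq_or_ne j i with rfl | hj
    · simpa [Function.update_self] using continuous_id'
    · simpa [Function.update_of_ne hj] using continuous_const
  have hcont_line : ContinuousOn (fun r => f (Function.update p i r)) (Icc a b) :=
    hf.continuousOn.comp hline_cont.continuousOn hmaps
  have hcont2 : ContinuousOn (fun r => pdC ρ h i f (Function.update p i r)) (Icc a b) :=
    (continuousOn_pdC hρ hh hf i).comp hline_cont.continuousOn hmaps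
  refine intervalIntegral.integral_eq_sub_of_hasDeriv_right_of_le hab hcont_line ?_ ?_
  · intro t ht
    have h1 := hasDerivWithinAt_line hρ hh hf i p (Icc a b)
      (hmaps t (Ioo_subset_Icc_self ht)) hmaps
    exact h1.mono_of_mem_nhdsWithin (Icc_mem_nhdsGT_of_mem ⟨ht.1.le, ht.2⟩)
  · rw [← uIcc_of_le hab] at hcont2
    exact hcont2.intervalIntegrable

lemma update_vec0 (a b c t : ℝ) : Function.update ![a, b, c] 0 t = ![t, b, c] := by
  funext j; fin_cases j <;> simp [Function.update]

lemma update_vec1 (a b c t : ℝ) : Function.update ![a, b, c] 1 t = ![a, t, c] := by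
  funext j; fin_cases j <;> simp [Function.update]

lemma update_vec2 (a b c t : ℝ) : Function.update ![a, b, c] 2 t = ![a, b, t] := by
  funext j; fin_cases j <;> simp [Function.update]


/-! ### Algebra helpers -/

lemma sq_lt_iff_mem_Ioo (s b : ℝ) : b ^ 2 < s ↔ b ∈ Ioo (-Real.sqrt s) (Real.sqrt s) := by
  rcases le_or_gt s 0 with hs | hs
  · have h0 : Real.sqrt s = 0 := Real.sqrt_eq_zero_of_nonpos hs
    rw [h0]
    simp only [neg_zero, mem_Ioo]
    constructor
    · intro hb; nlinarith [sq_nonneg b]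
    · rintro ⟨h1, h2⟩; linarith
  · have h1 : Real.sqrt s ^ 2 = s := Real.sq_sqrt hs.le
    have h2 : 0 < Real.sqrt s := Real.sqrt_pos.2 hs
    constructor
    · intro hb
      constructor <;> nlinarith
    · rintro ⟨hb1, hb2⟩
      nlinarith

lemma sqrt_bound {ρ b : ℝ} (hρ : 0 < ρ) (hb : b ^ 2 ≤ ρ ^ 2) {r : ℝ}
    (hr : r ∈ Icc (-Real.sqrt (ρ ^ 2 - b ^ 2)) (Real.sqrt (ρ ^ 2 - b ^ 2))) :
    r ^ 2 + b ^ 2 ≤ ρ ^ 2 := by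
  have h0 : (0:ℝ) ≤ ρ ^ 2 - b ^ 2 := by linarith
  have h1 : Real.sqrt (ρ ^ 2 - b ^ 2) ^ 2 = ρ ^ 2 - b ^ 2 := Real.sq_sqrt h0
  have h2 : r ^ 2 ≤ Real.sqrt (ρ ^ 2 - b ^ 2) ^ 2 := sq_le_sq' hr.1 hr.2
  linarith

lemma circle_mem_K {ρ h : ℝ} (hρ : 0 < ρ) (hh : 0 < h) {c : ℝ} (hc : c ∈ Icc 0 h) (θ : ℝ) :
    (![ρ * Real.cos θ, ρ * Real.sin θ, c] : Fin 3 → ℝ) ∈ closure (cyl ρ h) := by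
  rw [mem_K_iff hρ hh]
  refine ⟨le_of_eq ?_, hc.1, hc.2⟩
  have := Real.sin_sq_add_cos_sq θ
  ring_nf
  nlinarith [Real.sin_sq_add_cos_sq θ]

/-- `∫_{-ρ}^{ρ} √(ρ² - x²) dx = ρ² π/2`. -/
lemma integral_sqrt_rho {ρ : ℝ} (hρ : 0 < ρ) :
    ∫ x in (-ρ)..ρ, Real.sqrt (ρ ^ 2 - x ^ 2) = ρ ^ 2 * (π / 2) := by
  have h1 := intervalIntegral.smul_integral_comp_mul_left
    (a := (-1:ℝ)) (b := (1:ℝ)) (f := fun x => Real.sqrt (ρ ^ 2 - x ^ 2)) ρ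
  rw [mul_neg_one, mul_one] at h1
  rw [← h1]
  have h2 : ∀ x : ℝ, Real.sqrt (ρ ^ 2 - (ρ * x) ^ 2) = ρ * Real.sqrt (1 - x ^ 2) := by
    intro x
    rw [show ρ ^ 2 - (ρ * x) ^ 2 = ρ ^ 2 * (1 - x ^ 2) by ring,
      Real.sqrt_mul (sq_nonneg ρ), Real.sqrt_sq hρ.le]
  have h3 : (∫ x in (-1:ℝ)..1, Real.sqrt (ρ ^ 2 - (ρ * x) ^ 2)) =
      ρ * ∫ x in (-1:ℝ)..1, Real.sqrt (1 - x ^ 2) := by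
    rw [← intervalIntegral.integral_const_mul]
    refine intervalIntegral.integral_congr fun x _ => h2 x
  rw [smul_eq_mul, h3, integral_sqrt_one_sub_sq]
  ring

/-! ### FTC instantiations -/

lemma ftc_vert {ρ h : ℝ} (hρ : 0 < ρ) (hh : 0 < h) {u : (Fin 3 → ℝ) → ℝ} {φ α : ℝ}
    (hu : ContDiffOn ℝ 2 u (closure (cyl ρ h))) (hbc : BC ρ h u φ α)
    {a b : ℝ} (hab : a ^ 2 + b ^ 2 ≤ ρ ^ 2) :
    ∫ t in (0:ℝ)..h, pdC ρ h 2 (pdC ρ h 2 u) ![a, b, t] = α := by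
  have h1 := ftc_line hρ hh (contDiffOn_pdC hρ hh hu 2) 2 ![a, b, 0] hh.le
    (fun r hr => by rw [update_vec2, mem_K_iff hρ hh]; exact ⟨hab, hr.1, hr.2⟩)
  simp only [update_vec2] at h1
  rw [h1, (hbc.1 a b hab).2.1, (hbc.1 a b hab).2.2.2, sub_zero]

lemma ftc_horiz0 {ρ h : ℝ} (hρ : 0 < ρ) (hh : 0 < h) {u : (Fin 3 → ℝ) → ℝ}
    (hu : ContDiffOn ℝ 2 u (closure (cyl ρ h))) {b c : ℝ} (hb : b ^ 2 ≤ ρ ^ 2)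
    (hc : c ∈ Icc 0 h) :
    ∫ t in (-Real.sqrt (ρ ^ 2 - b ^ 2))..(Real.sqrt (ρ ^ 2 - b ^ 2)),
        pdC ρ h 0 (pdC ρ h 0 u) ![t, b, c] =
      pdC ρ h 0 u ![Real.sqrt (ρ ^ 2 - b ^ 2), b, c] -
        pdC ρ h 0 u ![-Real.sqrt (ρ ^ 2 - b ^ 2), b, c] := by
  have h1 := ftc_line hρ hh (contDiffOn_pdC hρ hh hu 0) 0 ![0, b, c]
    (neg_le_self (Real.sqrt_nonneg _))
    (fun r hr => by
      rw [update_vec0, mem_K_iff hρ hh]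
      exact ⟨sqrt_bound hρ hb hr, hc.1, hc.2⟩)
  simpa only [update_vec0] using h1

lemma ftc_horiz1 {ρ h : ℝ} (hρ : 0 < ρ) (hh : 0 < h) {u : (Fin 3 → ℝ) → ℝ}
    (hu : ContDiffOn ℝ 2 u (closure (cyl ρ h))) {a c : ℝ} (ha : a ^ 2 ≤ ρ ^ 2)
    (hc : c ∈ Icc 0 h) :
    ∫ t in (-Real.sqrt (ρ ^ 2 - a ^ 2))..(Real.sqrt (ρ ^ 2 - a ^ 2)),
        pdC ρ h 1 (pdC ρ h 1 u) ![a, t, c] =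
      pdC ρ h 1 u ![a, Real.sqrt (ρ ^ 2 - a ^ 2), c] -
        pdC ρ h 1 u ![a, -Real.sqrt (ρ ^ 2 - a ^ 2), c] := by
  have h1 := ftc_line hρ hh (contDiffOn_pdC hρ hh hu 1) 1 ![a, 0, c]
    (neg_le_self (Real.sqrt_nonneg _))
    (fun r hr => by
      rw [update_vec1, mem_K_iff hρ hh]
      refine ⟨by linarith [sqrt_bound hρ ha hr], hc.1, hc.2⟩)
  simpa only [update_vec1] using h1


/-! ### Fubini lemmas -/

lemma integrableOn_cyl {ρ h : ℝ} (hρ : 0 < ρ) (hh : 0 < h) {F : (Fin 3 → ℝ) → ℝ}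
    (hF : ContinuousOn F (closure (cyl ρ h))) : IntegrableOn F (cyl ρ h) :=
  (hF.integrableOn_compact (compact_K hρ hh)).mono_set subset_closure

/-- Fubini for the cylinder, inner integral along the first coordinate of the
decomposition, outer in the order `c`, then `s`. -/
lemma fubini_B {ρ h : ℝ} (hρ : 0 < ρ) (hh : 0 < h) (e : (Fin 3 → ℝ) ≃ᵐ ℝ × ℝ × ℝ)
    (he : MeasurePreserving e volume volume)
    (V : ℝ → ℝ → ℝ → (Fin 3 → ℝ))
    (hV : ∀ t s c, e.symm (t, s, c) = V t s c)
    (hmem : ∀ t s c, V t s c ∈ cyl ρ h ↔ (t ^ 2 + s ^ 2 < ρ ^ 2 ∧ 0 < c ∧ c < h))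
    {F : (Fin 3 → ℝ) → ℝ} (hF : ContinuousOn F (closure (cyl ρ h))) :
    ∫ x in cyl ρ h, F x =
      ∫ c in Ioo 0 h, ∫ s in Ioo (-ρ) ρ,
        ∫ t in Ioo (-Real.sqrt (ρ ^ 2 - s ^ 2)) (Real.sqrt (ρ ^ 2 - s ^ 2)), F (V t s c) := by
  have hFi : IntegrableOn F (cyl ρ h) := integrableOn_cyl hρ hh hF
  set w : ℝ → ℝ := fun s => Real.sqrt (ρ ^ 2 - s ^ 2) with hw
  set G : ℝ × ℝ × ℝ → ℝ := fun p => F (e.symm p) with hG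
  set S : Set (ℝ × ℝ × ℝ) := {p | p.1 ^ 2 + p.2.1 ^ 2 < ρ ^ 2 ∧ 0 < p.2.2 ∧ p.2.2 < h}
    with hS
  have hsymm_eq : ∀ p : ℝ × ℝ × ℝ, e.symm p = V p.1 p.2.1 p.2.2 := by
    intro p
    exact hV p.1 p.2.1 p.2.2
  have himg : e '' cyl ρ h = S := by
    ext p
    rw [MeasurableEquiv.image_eq_preimage_symm, mem_preimage, hsymm_eq p]
    exact (hmem p.1 p.2.1 p.2.2).trans Iff.rfl
  have hSopen : IsOpen S := by
    have c1 : Continuous fun p : ℝ × ℝ × ℝ => p.1 ^ 2 + p.2.1 ^ 2 :=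
      (continuous_fst.pow 2).add ((continuous_snd.fst).pow 2)
    exact (isOpen_lt c1 continuous_const).inter
      ((isOpen_lt continuous_const continuous_snd.snd).inter
        (isOpen_lt continuous_snd.snd continuous_const))
  have hSmeas : MeasurableSet S := hSopen.measurableSet
  have h1 : ∫ x in cyl ρ h, F x = ∫ p in S, G p := by
    rw [transport e he F, himg]
  have hGint : IntegrableOn G S := by
    rw [← himg]; exact transport_int e he hFi
  have hind : Integrable (S.indicator G) := (integrable_indicator_iff hSmeas).2 hGint
  have hind' : Integrable (S.indicator G) ((volume : Measure ℝ).prod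
      ((volume : Measure ℝ).prod (volume : Measure ℝ))) := by
    rwa [Measure.volume_eq_prod, Measure.volume_eq_prod] at hind
  have h2 : ∫ p in S, G p = ∫ p, S.indicator G p := (integral_indicator hSmeas).symm
  have h3 : ∫ p, S.indicator G p = ∫ q : ℝ × ℝ, ∫ t : ℝ, S.indicator G (t, q) := by
    rw [Measure.volume_eq_prod]
    rw [integral_prod_symm _ (by rwa [← Measure.volume_eq_prod] : Integrable (S.indicator G)
      ((volume : Measure ℝ).prod (volume : Measure (ℝ × ℝ))))]
  set J : ℝ × ℝ → ℝ := fun q => ∫ t in Ioo (-(w q.1)) (w q.1), G (t, q) with hJ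
  have key : ∀ q : ℝ × ℝ, (∫ t : ℝ, S.indicator G (t, q)) =
      ((Ioo (-ρ) ρ ×ˢ Ioo 0 h).indicator J) q := by
    rintro ⟨s, c⟩
    by_cases hc : 0 < c ∧ c < h
    · have hsec : (fun t => S.indicator G (t, s, c)) =
          (Ioo (-(w s)) (w s)).indicator (fun t => G (t, s, c)) := by
        funext t
        have hiff : ((t, s, c) ∈ S) ↔ t ∈ Ioo (-(w s)) (w s) := by
          simp only [hS, mem_setOf_eq, hc.1, hc.2, and_true]
          rw [← sq_lt_iff_mem_Ioo]
          constructor <;> intro hx <;> linarith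
        simp only [indicator_apply, hiff]
      rw [hsec, integral_indicator measurableSet_Ioo]
      by_cases hs : s ∈ Ioo (-ρ) ρ
      · rw [indicator_of_mem (by exact ⟨hs, hc⟩ : (s, c) ∈ Ioo (-ρ) ρ ×ˢ Ioo 0 h)]
      · have hw0 : w s = 0 := by
          apply Real.sqrt_eq_zero_of_nonpos
          simp only [mem_Ioo, not_and_or, not_lt] at hs
          rcases hs with hs | hs <;> nlinarith
        rw [indicator_of_notMem (by simp [hs] : (s, c) ∉ Ioo (-ρ) ρ ×ˢ Ioo 0 h)]
        rw [hw0]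
        simp
    · have hzero : (fun t => S.indicator G (t, s, c)) = fun _ => 0 := by
        funext t
        apply indicator_of_notMem
        simp only [hS, mem_setOf_eq]
        tauto
      rw [hzero]
      rw [indicator_of_notMem (by simp only [mem_prod, mem_Ioo]; tauto :
        (s, c) ∉ Ioo (-ρ) ρ ×ˢ Ioo 0 h)]
      simp
  have h4 : (∫ q : ℝ × ℝ, ∫ t : ℝ, S.indicator G (t, q)) =
      ∫ q in Ioo (-ρ) ρ ×ˢ Ioo 0 h, J q := by
    rw [show (fun q : ℝ × ℝ => ∫ t : ℝ, S.indicator G (t, q)) =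
        (Ioo (-ρ) ρ ×ˢ Ioo 0 h).indicator J from funext key]
    exact integral_indicator (measurableSet_Ioo.prod measurableSet_Ioo)
  have hJint : IntegrableOn J (Ioo (-ρ) ρ ×ˢ Ioo 0 h) := by
    have h5 := hind'.integral_prod_right
    rw [show (fun q : ℝ × ℝ => ∫ t : ℝ, S.indicator G (t, q) ∂(volume : Measure ℝ)) =
        (Ioo (-ρ) ρ ×ˢ Ioo 0 h).indicator J from funext key] at h5
    have h6 : Integrable ((Ioo (-ρ) ρ ×ˢ Ioo 0 h).indicator J) := by
      rwa [Measure.volume_eq_prod]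
    exact (integrable_indicator_iff (measurableSet_Ioo.prod measurableSet_Ioo)).1 h6
  have h7 : ∫ q in Ioo (-ρ) ρ ×ˢ Ioo 0 h, J q =
      ∫ c in Ioo 0 h, ∫ s in Ioo (-ρ) ρ, J (s, c) := by
    rw [Measure.volume_eq_prod, ← Measure.prod_restrict]
    refine integral_prod_symm J ?_
    rwa [Measure.prod_restrict, ← Measure.volume_eq_prod]
  rw [h1, h2, h3, h4, h7]
  refine setIntegral_congr_fun measurableSet_Ioo fun c _ => ?_
  refine setIntegral_congr_fun measurableSet_Ioo fun s _ => ?_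
  refine setIntegral_congr_fun measurableSet_Ioo fun t _ => ?_
  simp only [hJ, hG, hV]

/-- Fubini for the cylinder, inner integral along the vertical coordinate. -/
lemma fubini_C {ρ h : ℝ} (hρ : 0 < ρ) (hh : 0 < h) (e : (Fin 3 → ℝ) ≃ᵐ ℝ × ℝ × ℝ)
    (he : MeasurePreserving e volume volume)
    (V : ℝ → ℝ → ℝ → (Fin 3 → ℝ))
    (hV : ∀ a b c, e.symm (c, a, b) = V a b c)
    (hmem : ∀ a b c, V a b c ∈ cyl ρ h ↔ (a ^ 2 + b ^ 2 < ρ ^ 2 ∧ 0 < c ∧ c < h))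
    {F : (Fin 3 → ℝ) → ℝ} (hF : ContinuousOn F (closure (cyl ρ h))) :
    ∫ x in cyl ρ h, F x =
      ∫ a : ℝ, ∫ b in Ioo (-Real.sqrt (ρ ^ 2 - a ^ 2)) (Real.sqrt (ρ ^ 2 - a ^ 2)),
        ∫ c in Ioo 0 h, F (V a b c) := by
  have hFi : IntegrableOn F (cyl ρ h) := integrableOn_cyl hρ hh hF
  set w : ℝ → ℝ := fun s => Real.sqrt (ρ ^ 2 - s ^ 2) with hw
  set G : ℝ × ℝ × ℝ → ℝ := fun p => F (e.symm p) with hG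
  set S : Set (ℝ × ℝ × ℝ) := {p | p.2.1 ^ 2 + p.2.2 ^ 2 < ρ ^ 2 ∧ 0 < p.1 ∧ p.1 < h}
    with hS
  have hsymm_eq : ∀ p : ℝ × ℝ × ℝ, e.symm p = V p.2.1 p.2.2 p.1 := by
    intro p
    exact hV p.2.1 p.2.2 p.1
  have himg : e '' cyl ρ h = S := by
    ext p
    rw [MeasurableEquiv.image_eq_preimage_symm, mem_preimage, hsymm_eq p]
    exact (hmem p.2.1 p.2.2 p.1).trans Iff.rfl
  have hSopen : IsOpen S := by
    have c1 : Continuous fun p : ℝ × ℝ × ℝ => p.2.1 ^ 2 + p.2.2 ^ 2 :=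
      ((continuous_snd.fst).pow 2).add ((continuous_snd.snd).pow 2)
    exact (isOpen_lt c1 continuous_const).inter
      ((isOpen_lt continuous_const continuous_fst).inter
        (isOpen_lt continuous_fst continuous_const))
  have hSmeas : MeasurableSet S := hSopen.measurableSet
  have h1 : ∫ x in cyl ρ h, F x = ∫ p in S, G p := by
    rw [transport e he F, himg]
  have hGint : IntegrableOn G S := by
    rw [← himg]; exact transport_int e he hFi
  have hind : Integrable (S.indicator G) := (integrable_indicator_iff hSmeas).2 hGint
  have h2 : ∫ p in S, G p = ∫ p, S.indicator G p := (integral_indicator hSmeas).symm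
  have h3 : ∫ p, S.indicator G p = ∫ q : ℝ × ℝ, ∫ t : ℝ, S.indicator G (t, q) := by
    rw [Measure.volume_eq_prod]
    rw [integral_prod_symm _ (by rwa [← Measure.volume_eq_prod] : Integrable (S.indicator G)
      ((volume : Measure ℝ).prod (volume : Measure (ℝ × ℝ))))]
  set D : Set (ℝ × ℝ) := {q | q.1 ^ 2 + q.2 ^ 2 < ρ ^ 2} with hD
  set J : ℝ × ℝ → ℝ := fun q => ∫ t in Ioo 0 h, G (t, q) with hJ
  have hDmeas : MeasurableSet D := by
    have c1 : Continuous fun q : ℝ × ℝ => q.1 ^ 2 + q.2 ^ 2 :=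
      (continuous_fst.pow 2).add (continuous_snd.pow 2)
    exact (isOpen_lt c1 continuous_const).measurableSet
  have key : ∀ q : ℝ × ℝ, (∫ t : ℝ, S.indicator G (t, q)) = D.indicator J q := by
    rintro ⟨a, b⟩
    by_cases hq : a ^ 2 + b ^ 2 < ρ ^ 2
    · have hsec : (fun t => S.indicator G (t, a, b)) =
          (Ioo 0 h).indicator (fun t => G (t, a, b)) := by
        funext t
        have hiff : ((t, a, b) ∈ S) ↔ t ∈ Ioo 0 h := by
          simp only [hS, mem_setOf_eq, mem_Ioo, hq, true_and]
        simp only [indicator_apply, hiff]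
      rw [hsec, integral_indicator measurableSet_Ioo,
        indicator_of_mem (by exact hq : (a, b) ∈ D)]
    · have hzero : (fun t => S.indicator G (t, a, b)) = fun _ => 0 := by
        funext t
        apply indicator_of_notMem
        simp only [hS, mem_setOf_eq]
        tauto
      rw [hzero, indicator_of_notMem (by exact hq : (a, b) ∉ D)]
      simp
  have h4 : (∫ q : ℝ × ℝ, ∫ t : ℝ, S.indicator G (t, q)) = ∫ q in D, J q := by
    rw [show (fun q : ℝ × ℝ => ∫ t : ℝ, S.indicator G (t, q)) = D.indicator J
      from funext key]
    exact integral_indicator hDmeas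
  have hJind : Integrable (D.indicator J) := by
    have hind' : Integrable (S.indicator G) ((volume : Measure ℝ).prod
        (volume : Measure (ℝ × ℝ))) := by rwa [Measure.volume_eq_prod] at hind
    have h5 := hind'.integral_prod_right
    rwa [show (fun q : ℝ × ℝ => ∫ t : ℝ, S.indicator G (t, q) ∂(volume : Measure ℝ)) =
        D.indicator J from funext key] at h5
  have h6 : ∫ q in D, J q = ∫ a : ℝ, ∫ b : ℝ, D.indicator J (a, b) := by
    rw [← integral_indicator hDmeas, Measure.volume_eq_prod]
    exact integral_prod _ (by rwa [← Measure.volume_eq_prod])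
  have key2 : ∀ a : ℝ, (∫ b : ℝ, D.indicator J (a, b)) =
      ∫ b in Ioo (-(w a)) (w a), J (a, b) := by
    intro a
    have hsec : (fun b => D.indicator J (a, b)) =
        (Ioo (-(w a)) (w a)).indicator (fun b => J (a, b)) := by
      funext b
      have hiff : ((a, b) ∈ D) ↔ b ∈ Ioo (-(w a)) (w a) := by
        simp only [hD, mem_setOf_eq]
        rw [← sq_lt_iff_mem_Ioo]
        constructor <;> intro hx <;> linarith
      simp only [indicator_apply, hiff]
    rw [hsec, integral_indicator measurableSet_Ioo]
  rw [h1, h2, h3, h4, h6]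
  refine integral_congr_ae (Filter.Eventually.of_forall fun a => ?_)
  dsimp only
  rw [key2 a]
  refine setIntegral_congr_fun measurableSet_Ioo fun b _ => ?_
  refine setIntegral_congr_fun measurableSet_Ioo fun c _ => ?_
  simp only [hJ, hG, hV]


/-! ### The sine substitution -/

lemma subst_sin {ρ : ℝ} (hρ : 0 < ρ) {g : ℝ → ℝ} (hg : ContinuousOn g (Icc (-ρ) ρ)) :
    ∫ s in Ioo (-ρ) ρ, g s =
      ∫ θ in (-(π/2))..(π/2), (ρ * Real.cos θ) * g (ρ * Real.sin θ) := by
  have h1 : ∫ s in Ioo (-ρ) ρ, g s = ∫ s in (-ρ)..ρ, g s := by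
    rw [intervalIntegral.integral_of_le (by linarith), integral_Ioc_eq_integral_Ioo]
  have hcf : ContinuousOn (fun θ : ℝ => ρ * Real.sin θ) (uIcc (-(π/2)) (π/2)) :=
    (continuous_const.mul Real.continuous_sin).continuousOn
  have hder : ∀ x ∈ Ioo (min (-(π/2)) (π/2)) (max (-(π/2)) (π/2)),
      HasDerivWithinAt (fun θ : ℝ => ρ * Real.sin θ) (ρ * Real.cos x) (Ioi x) x :=
    fun x _ => ((Real.hasDerivAt_sin x).const_mul ρ).hasDerivWithinAt
  have hcf' : ContinuousOn (fun θ : ℝ => ρ * Real.cos θ) (uIcc (-(π/2)) (π/2)) :=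
    (continuous_const.mul Real.continuous_cos).continuousOn
  have hcg : ContinuousOn g ((fun θ : ℝ => ρ * Real.sin θ) '' uIcc (-(π/2)) (π/2)) := by
    refine hg.mono ?_
    rw [image_subset_iff]
    intro θ _
    simp only [mem_preimage, mem_Icc]
    constructor
    · nlinarith [mul_nonneg hρ.le (show (0:ℝ) ≤ 1 + Real.sin θ by
        linarith [Real.neg_one_le_sin θ])]
    · nlinarith [mul_nonneg hρ.le (show (0:ℝ) ≤ 1 - Real.sin θ by
        linarith [Real.sin_le_one θ])]
  have h2 := intervalIntegral.integral_comp_smul_deriv'' (a := -(π/2)) (b := (π/2))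
    (f := fun θ : ℝ => ρ * Real.sin θ) (f' := fun θ : ℝ => ρ * Real.cos θ) (g := g)
    hcf hder hcf' hcg
  rw [show ρ * Real.sin (-(π/2)) = -ρ by rw [Real.sin_neg, Real.sin_pi_div_two]; ring,
    show ρ * Real.sin (π/2) = ρ by rw [Real.sin_pi_div_two]; ring] at h2
  rw [h1, ← h2]
  refine intervalIntegral.integral_congr fun θ _ => ?_
  simp [Function.comp]

/-! ### The circle cancellation -/

lemma cont_circle_map (ρ c : ℝ) :
    Continuous fun θ : ℝ => (![ρ * Real.cos θ, ρ * Real.sin θ, c] : Fin 3 → ℝ) := by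
  refine continuous_pi fun j => ?_
  fin_cases j <;> simp <;>
    first
      | exact continuous_const.mul Real.continuous_cos
      | exact continuous_const.mul Real.continuous_sin
      | exact continuous_const

lemma cont_vec_sqrt {ρ : ℝ} (c : ℝ) (swap : Bool) :
    Continuous fun s : ℝ => (if swap then
      (![s, Real.sqrt (ρ ^ 2 - s ^ 2), c] : Fin 3 → ℝ)
      else ![Real.sqrt (ρ ^ 2 - s ^ 2), s, c]) := by
  have hsq : Continuous fun s : ℝ => Real.sqrt (ρ ^ 2 - s ^ 2) :=
    Real.continuous_sqrt.comp (continuous_const.sub (continuous_pow 2))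
  cases swap <;> simp only [if_true, if_false, Bool.false_eq_true] <;>
    refine continuous_pi fun j => ?_ <;> fin_cases j <;> simp <;>
      first
        | exact hsq
        | exact continuous_id
        | exact continuous_const

lemma circle_cancel {ρ h : ℝ} (hρ : 0 < ρ) (hh : 0 < h) {u : (Fin 3 → ℝ) → ℝ} {φ α : ℝ}
    (hu : ContDiffOn ℝ 2 u (closure (cyl ρ h))) (hbc : BC ρ h u φ α)
    {c : ℝ} (hc : c ∈ Icc 0 h) :
    (∫ s in Ioo (-ρ) ρ, (pdC ρ h 1 u ![s, Real.sqrt (ρ ^ 2 - s ^ 2), c] -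
        pdC ρ h 1 u ![s, -Real.sqrt (ρ ^ 2 - s ^ 2), c])) =
      - ∫ s in Ioo (-ρ) ρ, (pdC ρ h 0 u ![Real.sqrt (ρ ^ 2 - s ^ 2), s, c] -
        pdC ρ h 0 u ![-Real.sqrt (ρ ^ 2 - s ^ 2), s, c]) := by
  have hU0 : ContinuousOn (pdC ρ h 0 u) (closure (cyl ρ h)) :=
    (contDiffOn_pdC hρ hh hu 0).continuousOn
  have hU1 : ContinuousOn (pdC ρ h 1 u) (closure (cyl ρ h)) :=
    (contDiffOn_pdC hρ hh hu 1).continuousOn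
  have hsq : Continuous fun s : ℝ => Real.sqrt (ρ ^ 2 - s ^ 2) :=
    Real.continuous_sqrt.comp (continuous_const.sub (continuous_pow 2))
  have hmemv : ∀ s ∈ Icc (-ρ) ρ, ∀ ε : ℝ, ε = 1 ∨ ε = -1 →
      (![ε * Real.sqrt (ρ ^ 2 - s ^ 2), s, c] : Fin 3 → ℝ) ∈ closure (cyl ρ h) ∧
      (![s, ε * Real.sqrt (ρ ^ 2 - s ^ 2), c] : Fin 3 → ℝ) ∈ closure (cyl ρ h) := by
    intro s hs ε hε
    have hs2 : s ^ 2 ≤ ρ ^ 2 := by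
      rcases hs with ⟨h1, h2⟩; nlinarith
    have hsq2 : (ε * Real.sqrt (ρ ^ 2 - s ^ 2)) ^ 2 = ρ ^ 2 - s ^ 2 := by
      have := Real.sq_sqrt (by linarith : (0:ℝ) ≤ ρ ^ 2 - s ^ 2)
      rcases hε with rfl | rfl <;> nlinarith
    constructor <;> rw [mem_K_iff hρ hh] <;>
      exact ⟨by nlinarith, hc.1, hc.2⟩
  -- the two circle functions
  set H : ℝ → ℝ := fun θ => pdC ρ h 0 u ![ρ * Real.cos θ, ρ * Real.sin θ, c] with hH
  set G : ℝ → ℝ := fun θ => pdC ρ h 1 u ![ρ * Real.cos θ, ρ * Real.sin θ, c] with hG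
  have hHcont : Continuous H :=
    hU0.comp_continuous (cont_circle_map ρ c) (fun θ => circle_mem_K hρ hh hc θ)
  have hGcont : Continuous G :=
    hU1.comp_continuous (cont_circle_map ρ c) (fun θ => circle_mem_K hρ hh hc θ)
  -- continuity of the two integrands on Icc
  have hg0cont : ContinuousOn (fun s => pdC ρ h 0 u ![Real.sqrt (ρ ^ 2 - s ^ 2), s, c] -
      pdC ρ h 0 u ![-Real.sqrt (ρ ^ 2 - s ^ 2), s, c]) (Icc (-ρ) ρ) := by
    have c1 : Continuous fun s : ℝ => (![Real.sqrt (ρ ^ 2 - s ^ 2), s, c] : Fin 3 → ℝ) := by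
      simpa using cont_vec_sqrt (ρ := ρ) c false
    have c2 : Continuous fun s : ℝ => (![-Real.sqrt (ρ ^ 2 - s ^ 2), s, c] : Fin 3 → ℝ) := by
      refine continuous_pi fun j => ?_
      fin_cases j <;> simp <;>
        first
          | exact hsq.neg
          | exact continuous_id
          | exact continuous_const
    refine ContinuousOn.sub ?_ ?_
    · refine hU0.comp c1.continuousOn fun s hs => ?_
      simpa using (hmemv s hs 1 (Or.inl rfl)).1
    · refine hU0.comp c2.continuousOn fun s hs => ?_
      simpa using (hmemv s hs (-1) (Or.inr rfl)).1
  have hg1cont : ContinuousOn (fun s => pdC ρ h 1 u ![s, Real.sqrt (ρ ^ 2 - s ^ 2), c] -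
      pdC ρ h 1 u ![s, -Real.sqrt (ρ ^ 2 - s ^ 2), c]) (Icc (-ρ) ρ) := by
    have c1 : Continuous fun s : ℝ => (![s, Real.sqrt (ρ ^ 2 - s ^ 2), c] : Fin 3 → ℝ) := by
      simpa using cont_vec_sqrt (ρ := ρ) c true
    have c2 : Continuous fun s : ℝ => (![s, -Real.sqrt (ρ ^ 2 - s ^ 2), c] : Fin 3 → ℝ) := by
      refine continuous_pi fun j => ?_
      fin_cases j <;> simp <;>
        first
          | exact hsq.neg
          | exact continuous_id
          | exact continuous_const
    refine ContinuousOn.sub ?_ ?_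
    · refine hU1.comp c1.continuousOn fun s hs => ?_
      simpa using (hmemv s hs 1 (Or.inl rfl)).2
    · refine hU1.comp c2.continuousOn fun s hs => ?_
      simpa using (hmemv s hs (-1) (Or.inr rfl)).2
  -- substitute in both
  rw [subst_sin hρ hg0cont, subst_sin hρ hg1cont]
  -- simplify √(ρ² - (ρ sin θ)²) = ρ cos θ on the interval
  have hsqcos : ∀ θ ∈ uIcc (-(π/2)) (π/2), Real.sqrt (ρ ^ 2 - (ρ * Real.sin θ) ^ 2)
      = ρ * Real.cos θ := by
    intro θ hθ
    rw [uIcc_of_le (by linarith [Real.pi_pos])] at hθ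
    have hcos : 0 ≤ Real.cos θ := Real.cos_nonneg_of_mem_Icc hθ
    rw [show ρ ^ 2 - (ρ * Real.sin θ) ^ 2 = (ρ * Real.cos θ) ^ 2 by
      nlinarith [Real.sin_sq_add_cos_sq θ]]
    exact Real.sqrt_sq (by positivity)
  -- rewrite the LHS (the `1` direction integrals)
  have lhs_eq : (∫ θ in (-(π/2))..(π/2), (ρ * Real.cos θ) *
        ((fun s => pdC ρ h 1 u ![s, Real.sqrt (ρ ^ 2 - s ^ 2), c] -
          pdC ρ h 1 u ![s, -Real.sqrt (ρ ^ 2 - s ^ 2), c]) (ρ * Real.sin θ))) =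
      ∫ θ in (-(π/2))..(π/2),
        ((fun φ => ρ * Real.sin φ * G φ) (π/2 - θ) - (fun φ => -(ρ * Real.sin φ) * G φ) (θ - π/2)) := by
    refine intervalIntegral.integral_congr fun θ hθ => ?_
    have e1 := hsqcos θ hθ
    dsimp only
    rw [e1]
    have v1 : (![ρ * Real.sin θ, ρ * Real.cos θ, c] : Fin 3 → ℝ) =
        ![ρ * Real.cos (π/2 - θ), ρ * Real.sin (π/2 - θ), c] := by
      rw [Real.cos_pi_div_two_sub, Real.sin_pi_div_two_sub]
    have v2 : (![ρ * Real.sin θ, -(ρ * Real.cos θ), c] : Fin 3 → ℝ) =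
        ![ρ * Real.cos (θ - π/2), ρ * Real.sin (θ - π/2), c] := by
      rw [Real.cos_sub_pi_div_two, Real.sin_sub_pi_div_two]
      ring_nf
    rw [v1, v2, hG]
    dsimp only
    rw [Real.sin_pi_div_two_sub, Real.sin_sub_pi_div_two]
    ring
  have rhs_eq : (∫ θ in (-(π/2))..(π/2), (ρ * Real.cos θ) *
        ((fun s => pdC ρ h 0 u ![Real.sqrt (ρ ^ 2 - s ^ 2), s, c] -
          pdC ρ h 0 u ![-Real.sqrt (ρ ^ 2 - s ^ 2), s, c]) (ρ * Real.sin θ))) =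
      ∫ θ in (-(π/2))..(π/2),
        ((ρ * Real.cos θ) * H θ - (fun φ => -(ρ * Real.cos φ) * H φ) (π - θ)) := by
    refine intervalIntegral.integral_congr fun θ hθ => ?_
    have e1 := hsqcos θ hθ
    dsimp only
    rw [e1]
    have v2 : (![-(ρ * Real.cos θ), ρ * Real.sin θ, c] : Fin 3 → ℝ) =
        ![ρ * Real.cos (π - θ), ρ * Real.sin (π - θ), c] := by
      rw [Real.cos_pi_sub, Real.sin_pi_sub]
      ring_nf
    rw [v2, hH]
    dsimp only
    rw [Real.cos_pi_sub]
    ring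
  rw [lhs_eq, rhs_eq]
  -- integrability facts
  have int_cosH : ∀ a b : ℝ, IntervalIntegrable (fun θ => ρ * Real.cos θ * H θ) volume a b :=
    fun a b => ((continuous_const.mul Real.continuous_cos).mul hHcont).intervalIntegrable a b
  have int_sinG : ∀ a b : ℝ, IntervalIntegrable (fun θ => ρ * Real.sin θ * G θ) volume a b :=
    fun a b => ((continuous_const.mul Real.continuous_sin).mul hGcont).intervalIntegrable a b
  -- continuity of composed pieces
  have cont_sinG : Continuous fun φ => ρ * Real.sin φ * G φ :=
    (continuous_const.mul Real.continuous_sin).mul hGcont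
  have cont_sinG' : Continuous fun φ => -(ρ * Real.sin φ) * G φ :=
    ((continuous_const.mul Real.continuous_sin).neg).mul hGcont
  have cont_cosH : Continuous fun φ => ρ * Real.cos φ * H φ :=
    (continuous_const.mul Real.continuous_cos).mul hHcont
  have cont_cosH' : Continuous fun φ => -(ρ * Real.cos φ) * H φ :=
    ((continuous_const.mul Real.continuous_cos).neg).mul hHcont
  have hi1 : IntervalIntegrable
      (fun θ => (fun φ => ρ * Real.sin φ * G φ) (π/2 - θ)) volume (-(π/2)) (π/2) :=
    (cont_sinG.comp (continuous_const.sub continuous_id)).intervalIntegrable _ _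
  have hi2 : IntervalIntegrable
      (fun θ => (fun φ => -(ρ * Real.sin φ) * G φ) (θ - π/2)) volume (-(π/2)) (π/2) :=
    (cont_sinG'.comp (continuous_id.sub continuous_const)).intervalIntegrable _ _
  have hi3 : IntervalIntegrable
      (fun θ => ρ * Real.cos θ * H θ) volume (-(π/2)) (π/2) :=
    cont_cosH.intervalIntegrable _ _
  have hi4 : IntervalIntegrable
      (fun θ => (fun φ => -(ρ * Real.cos φ) * H φ) (π - θ)) volume (-(π/2)) (π/2) :=
    (cont_cosH'.comp (continuous_const.sub continuous_id)).intervalIntegrable _ _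
  rw [intervalIntegral.integral_sub hi1 hi2, intervalIntegral.integral_sub hi3 hi4]
  have hA : (∫ θ in (-(π/2))..(π/2), (fun φ => ρ * Real.sin φ * G φ) (π/2 - θ)) =
      ∫ φ in (0:ℝ)..π, ρ * Real.sin φ * G φ := by
    rw [intervalIntegral.integral_comp_sub_left (fun φ => ρ * Real.sin φ * G φ) (π/2)]
    norm_num
  have hB : (∫ θ in (-(π/2))..(π/2), (fun φ => -(ρ * Real.sin φ) * G φ) (θ - π/2)) =
      -∫ φ in (-π)..(0:ℝ), ρ * Real.sin φ * G φ := by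
    rw [intervalIntegral.integral_comp_sub_right (fun φ => -(ρ * Real.sin φ) * G φ) (π/2)]
    rw [show -(π/2) - π/2 = -π by ring, show π/2 - π/2 = (0:ℝ) by ring]
    rw [← intervalIntegral.integral_neg]
    exact intervalIntegral.integral_congr fun φ _ => by ring
  have hC : (∫ θ in (-(π/2))..(π/2), (fun φ => -(ρ * Real.cos φ) * H φ) (π - θ)) =
      -∫ φ in (π/2)..(π + π/2), ρ * Real.cos φ * H φ := by
    rw [intervalIntegral.integral_comp_sub_left (fun φ => -(ρ * Real.cos φ) * H φ) π]
    rw [show π - π/2 = π/2 by ring, show π - -(π/2) = π + π/2 by ring]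
    rw [← intervalIntegral.integral_neg]
    exact intervalIntegral.integral_congr fun φ _ => by ring
  rw [hA, hB, hC]
  have hL : (∫ φ in (-π)..(0:ℝ), ρ * Real.sin φ * G φ) +
      (∫ φ in (0:ℝ)..π, ρ * Real.sin φ * G φ) = ∫ φ in (-π)..π, ρ * Real.sin φ * G φ :=
    intervalIntegral.integral_add_adjacent_intervals
      (cont_sinG.intervalIntegrable _ _) (cont_sinG.intervalIntegrable _ _)
  have hR : (∫ φ in (-(π/2))..(π/2), ρ * Real.cos φ * H φ) +
      (∫ φ in (π/2)..(π + π/2), ρ * Real.cos φ * H φ) =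
      ∫ φ in (-(π/2))..(π + π/2), ρ * Real.cos φ * H φ :=
    intervalIntegral.integral_add_adjacent_intervals
      (cont_cosH.intervalIntegrable _ _) (cont_cosH.intervalIntegrable _ _)
  have hp : Function.Periodic (fun φ => ρ * Real.sin φ * G φ) (2*π) := by
    intro φ
    simp only [hG]
    rw [Real.sin_add_two_pi, Real.cos_add_two_pi]
  have hper : (∫ φ in (-π)..π, ρ * Real.sin φ * G φ) =
      ∫ φ in (-(π/2))..(π + π/2), ρ * Real.sin φ * G φ := by
    have h9 := hp.intervalIntegral_add_eq (-π) (-(π/2))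
    rwa [show -π + 2*π = π by ring, show -(π/2) + 2*π = π + π/2 by ring] at h9
  have hptw : ∀ θ : ℝ, ρ * Real.sin θ * G θ = -(ρ * Real.cos θ * H θ) := by
    intro θ
    have hb := hbc.2 (ρ * Real.cos θ) (ρ * Real.sin θ) c
      (by nlinarith [Real.sin_sq_add_cos_sq θ]) hc.1 hc.2
    simp only [hH, hG]
    linarith
  have hfinal : (∫ φ in (-(π/2))..(π + π/2), ρ * Real.sin φ * G φ) =
      -∫ φ in (-(π/2))..(π + π/2), ρ * Real.cos φ * H φ := by
    rw [← intervalIntegral.integral_neg]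
    exact intervalIntegral.integral_congr fun θ _ => hptw θ
  linarith [hL, hR, hper, hfinal]


/-! ### The three terms -/

lemma term2 {ρ h : ℝ} (hρ : 0 < ρ) (hh : 0 < h) {u : (Fin 3 → ℝ) → ℝ} {φ α : ℝ}
    (hu : ContDiffOn ℝ 2 u (closure (cyl ρ h))) (hbc : BC ρ h u φ α) :
    ∫ x in cyl ρ h, pdC ρ h 2 (pdC ρ h 2 u) x = α * (π * ρ ^ 2) := by
  have hF : ContinuousOn (pdC ρ h 2 (pdC ρ h 2 u)) (closure (cyl ρ h)) :=
    continuousOn_pdC hρ hh (contDiffOn_pdC hρ hh hu 2) 2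
  have hmem : ∀ a b c : ℝ, (![a, b, c] : Fin 3 → ℝ) ∈ cyl ρ h ↔
      (a ^ 2 + b ^ 2 < ρ ^ 2 ∧ 0 < c ∧ c < h) := by
    intro a b c; simp [cyl]
  rw [fubini_C hρ hh (Meq 2) (Meq_mp 2) (fun a b c => ![a, b, c])
    (fun a b c => Meq2_symm a b c) hmem hF]
  have hinner : ∀ a : ℝ,
      (∫ b in Ioo (-Real.sqrt (ρ ^ 2 - a ^ 2)) (Real.sqrt (ρ ^ 2 - a ^ 2)),
        ∫ c in Ioo 0 h, pdC ρ h 2 (pdC ρ h 2 u) ![a, b, c]) =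
      α * (2 * Real.sqrt (ρ ^ 2 - a ^ 2)) := by
    intro a
    rcases le_or_gt (ρ ^ 2 - a ^ 2) 0 with hneg | hpos
    · rw [Real.sqrt_eq_zero_of_nonpos hneg]
      simp
    · have heq : ∀ b ∈ Ioo (-Real.sqrt (ρ ^ 2 - a ^ 2)) (Real.sqrt (ρ ^ 2 - a ^ 2)),
          (∫ c in Ioo 0 h, pdC ρ h 2 (pdC ρ h 2 u) ![a, b, c]) = α := by
        intro b hb
        have hab : a ^ 2 + b ^ 2 ≤ ρ ^ 2 := by
          have := sqrt_bound hρ (by nlinarith : a ^ 2 ≤ ρ ^ 2) (Ioo_subset_Icc_self hb)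
          linarith
        rw [← integral_Ioc_eq_integral_Ioo, ← intervalIntegral.integral_of_le hh.le]
        exact ftc_vert hρ hh hu hbc hab
      rw [setIntegral_congr_fun measurableSet_Ioo heq, setIntegral_const, measureReal_def, Real.volume_Ioo,
        show Real.sqrt (ρ ^ 2 - a ^ 2) - -Real.sqrt (ρ ^ 2 - a ^ 2)
          = 2 * Real.sqrt (ρ ^ 2 - a ^ 2) by ring,
        ENNReal.toReal_ofReal (by positivity), smul_eq_mul]
      ring
  rw [show (fun a : ℝ => ∫ b in Ioo (-Real.sqrt (ρ ^ 2 - a ^ 2)) (Real.sqrt (ρ ^ 2 - a ^ 2)),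
        ∫ c in Ioo 0 h, pdC ρ h 2 (pdC ρ h 2 u) ![a, b, c]) =
      (fun a : ℝ => α * (2 * Real.sqrt (ρ ^ 2 - a ^ 2))) from funext hinner]
  rw [← setIntegral_eq_integral_of_forall_compl_eq_zero (s := Ioc (-ρ) ρ) (fun a ha => by
    simp only [mem_Ioc, not_and_or, not_lt, not_le] at ha
    have h0 : ρ ^ 2 - a ^ 2 ≤ 0 := by rcases ha with ha | ha <;> nlinarith
    rw [Real.sqrt_eq_zero_of_nonpos h0]; ring)]
  rw [← intervalIntegral.integral_of_le (by linarith : -ρ ≤ ρ)]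
  calc (∫ a in (-ρ)..ρ, α * (2 * Real.sqrt (ρ ^ 2 - a ^ 2)))
      = (α * 2) * ∫ a in (-ρ)..ρ, Real.sqrt (ρ ^ 2 - a ^ 2) := by
        rw [← intervalIntegral.integral_const_mul]
        exact intervalIntegral.integral_congr fun a _ => by ring
    _ = α * (π * ρ ^ 2) := by rw [integral_sqrt_rho hρ]; ring

lemma term01 {ρ h : ℝ} (hρ : 0 < ρ) (hh : 0 < h) {u : (Fin 3 → ℝ) → ℝ} {φ α : ℝ}
    (hu : ContDiffOn ℝ 2 u (closure (cyl ρ h))) (hbc : BC ρ h u φ α) :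
    (∫ x in cyl ρ h, pdC ρ h 0 (pdC ρ h 0 u) x) +
      (∫ x in cyl ρ h, pdC ρ h 1 (pdC ρ h 1 u) x) = 0 := by
  have hF0 : ContinuousOn (pdC ρ h 0 (pdC ρ h 0 u)) (closure (cyl ρ h)) :=
    continuousOn_pdC hρ hh (contDiffOn_pdC hρ hh hu 0) 0
  have hF1 : ContinuousOn (pdC ρ h 1 (pdC ρ h 1 u)) (closure (cyl ρ h)) :=
    continuousOn_pdC hρ hh (contDiffOn_pdC hρ hh hu 1) 1
  have hmem0 : ∀ t s c : ℝ, (![t, s, c] : Fin 3 → ℝ) ∈ cyl ρ h ↔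
      (t ^ 2 + s ^ 2 < ρ ^ 2 ∧ 0 < c ∧ c < h) := by
    intro t s c; simp [cyl]
  have hmem1 : ∀ t s c : ℝ, (![s, t, c] : Fin 3 → ℝ) ∈ cyl ρ h ↔
      (t ^ 2 + s ^ 2 < ρ ^ 2 ∧ 0 < c ∧ c < h) := by
    intro t s c
    rw [hmem0 s t c]
    constructor <;> rintro ⟨h1, h2⟩ <;> exact ⟨by linarith, h2⟩
  have A0 : (∫ x in cyl ρ h, pdC ρ h 0 (pdC ρ h 0 u) x) =
      ∫ c in Ioo 0 h, ∫ s in Ioo (-ρ) ρ,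
        (pdC ρ h 0 u ![Real.sqrt (ρ ^ 2 - s ^ 2), s, c] -
          pdC ρ h 0 u ![-Real.sqrt (ρ ^ 2 - s ^ 2), s, c]) := by
    rw [fubini_B hρ hh (Meq 0) (Meq_mp 0) (fun t s c => ![t, s, c])
      (fun t s c => Meq0_symm t s c) hmem0 hF0]
    refine setIntegral_congr_fun measurableSet_Ioo fun c hc => ?_
    refine setIntegral_congr_fun measurableSet_Ioo fun s hs => ?_
    rw [← integral_Ioc_eq_integral_Ioo,
      ← intervalIntegral.integral_of_le (neg_le_self (Real.sqrt_nonneg _))]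
    exact ftc_horiz0 hρ hh hu (by nlinarith [hs.1, hs.2] : s ^ 2 ≤ ρ ^ 2) ⟨hc.1.le, hc.2.le⟩
  have A1 : (∫ x in cyl ρ h, pdC ρ h 1 (pdC ρ h 1 u) x) =
      ∫ c in Ioo 0 h, ∫ s in Ioo (-ρ) ρ,
        (pdC ρ h 1 u ![s, Real.sqrt (ρ ^ 2 - s ^ 2), c] -
          pdC ρ h 1 u ![s, -Real.sqrt (ρ ^ 2 - s ^ 2), c]) := by
    rw [fubini_B hρ hh (Meq 1) (Meq_mp 1) (fun t s c => ![s, t, c])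
      (fun t s c => Meq1_symm s t c) hmem1 hF1]
    refine setIntegral_congr_fun measurableSet_Ioo fun c hc => ?_
    refine setIntegral_congr_fun measurableSet_Ioo fun s hs => ?_
    rw [← integral_Ioc_eq_integral_Ioo,
      ← intervalIntegral.integral_of_le (neg_le_self (Real.sqrt_nonneg _))]
    exact ftc_horiz1 hρ hh hu (by nlinarith [hs.1, hs.2] : s ^ 2 ≤ ρ ^ 2) ⟨hc.1.le, hc.2.le⟩
  have A2 : (∫ c in Ioo 0 h, ∫ s in Ioo (-ρ) ρ,
        (pdC ρ h 1 u ![s, Real.sqrt (ρ ^ 2 - s ^ 2), c] -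
          pdC ρ h 1 u ![s, -Real.sqrt (ρ ^ 2 - s ^ 2), c])) =
      ∫ c in Ioo 0 h, -(∫ s in Ioo (-ρ) ρ,
        (pdC ρ h 0 u ![Real.sqrt (ρ ^ 2 - s ^ 2), s, c] -
          pdC ρ h 0 u ![-Real.sqrt (ρ ^ 2 - s ^ 2), s, c])) := by
    refine setIntegral_congr_fun measurableSet_Ioo fun c hc => ?_
    exact circle_cancel hρ hh hu hbc ⟨hc.1.le, hc.2.le⟩
  rw [A0, A1, A2, integral_neg]
  exact add_neg_cancel _

lemma integral_lapC {ρ h : ℝ} (hρ : 0 < ρ) (hh : 0 < h) {u : (Fin 3 → ℝ) → ℝ} {φ α : ℝ}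
    (hu : ContDiffOn ℝ 2 u (closure (cyl ρ h))) (hbc : BC ρ h u φ α) :
    ∫ x in cyl ρ h, lapC ρ h u x = α * (π * ρ ^ 2) := by
  have hFi : ∀ i : Fin 3, IntegrableOn (pdC ρ h i (pdC ρ h i u)) (cyl ρ h) := fun i =>
    integrableOn_cyl hρ hh (continuousOn_pdC hρ hh (contDiffOn_pdC hρ hh hu i) i)
  have hsum : ∀ x, lapC ρ h u x = pdC ρ h 0 (pdC ρ h 0 u) x +
      pdC ρ h 1 (pdC ρ h 1 u) x + pdC ρ h 2 (pdC ρ h 2 u) x := by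
    intro x; simp [lapC, Fin.sum_univ_three]
  rw [setIntegral_congr_fun (isOpen_cyl ρ h).measurableSet fun x _ => hsum x]
  have h01 : IntegrableOn (fun x => pdC ρ h 0 (pdC ρ h 0 u) x +
      pdC ρ h 1 (pdC ρ h 1 u) x) (cyl ρ h) := (hFi 0).add (hFi 1)
  rw [integral_add h01 (hFi 2), integral_add (hFi 0) (hFi 1)]
  rw [term01 hρ hh hu hbc, term2 hρ hh hu hbc, zero_add]

lemma volume_cyl {ρ h : ℝ} (hρ : 0 < ρ) (hh : 0 < h) :
    (volume (cyl ρ h)).toReal = π * ρ ^ 2 * h := by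
  have h1 : ∫ _x in cyl ρ h, (1:ℝ) = (volume (cyl ρ h)).toReal := by
    rw [setIntegral_const, measureReal_def, smul_eq_mul, mul_one]
  rw [← h1]
  have hmem : ∀ a b c : ℝ, (![a, b, c] : Fin 3 → ℝ) ∈ cyl ρ h ↔
      (a ^ 2 + b ^ 2 < ρ ^ 2 ∧ 0 < c ∧ c < h) := by
    intro a b c; simp [cyl]
  rw [fubini_C hρ hh (Meq 2) (Meq_mp 2) (fun a b c => ![a, b, c])
    (fun a b c => Meq2_symm a b c) hmem continuousOn_const]
  have hinner : ∀ a : ℝ,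
      (∫ b in Ioo (-Real.sqrt (ρ ^ 2 - a ^ 2)) (Real.sqrt (ρ ^ 2 - a ^ 2)),
        ∫ _c in Ioo 0 h, (1:ℝ)) = h * (2 * Real.sqrt (ρ ^ 2 - a ^ 2)) := by
    intro a
    have hc1 : ∫ _c in Ioo 0 h, (1:ℝ) = h := by
      rw [setIntegral_const, measureReal_def, Real.volume_Ioo, sub_zero, ENNReal.toReal_ofReal hh.le,
        smul_eq_mul, mul_one]
    rw [hc1, setIntegral_const, measureReal_def, Real.volume_Ioo,
      show Real.sqrt (ρ ^ 2 - a ^ 2) - -Real.sqrt (ρ ^ 2 - a ^ 2)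
        = 2 * Real.sqrt (ρ ^ 2 - a ^ 2) by ring,
      ENNReal.toReal_ofReal (by positivity), smul_eq_mul]
    ring
  rw [show (fun a : ℝ => ∫ b in Ioo (-Real.sqrt (ρ ^ 2 - a ^ 2)) (Real.sqrt (ρ ^ 2 - a ^ 2)),
        ∫ _c in Ioo 0 h, (1:ℝ)) =
      (fun a : ℝ => h * (2 * Real.sqrt (ρ ^ 2 - a ^ 2))) from funext hinner]
  rw [← setIntegral_eq_integral_of_forall_compl_eq_zero (s := Ioc (-ρ) ρ) (fun a ha => by
    simp only [mem_Ioc, not_and_or, not_lt, not_le] at ha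
    have h0 : ρ ^ 2 - a ^ 2 ≤ 0 := by rcases ha with ha | ha <;> nlinarith
    rw [Real.sqrt_eq_zero_of_nonpos h0]; ring)]
  rw [← intervalIntegral.integral_of_le (by linarith : -ρ ≤ ρ)]
  calc (∫ a in (-ρ)..ρ, h * (2 * Real.sqrt (ρ ^ 2 - a ^ 2)))
      = (h * 2) * ∫ a in (-ρ)..ρ, Real.sqrt (ρ ^ 2 - a ^ 2) := by
        rw [← intervalIntegral.integral_const_mul]
        exact intervalIntegral.integral_congr fun a _ => by ring
    _ = π * ρ ^ 2 * h := by rw [integral_sqrt_rho hρ]; ring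

end LapAux

/-- If `u ∈ C²(closure Ω)` satisfies (BC), then
`πρ²α²/h ≤ ∫_Ω (Δu)²`. -/
theorem laplacian_lower_estimate_cylinder (ρ h : ℝ) (hρ : 0 < ρ) (hh : 1 / 2 < h)
    (u : (Fin 3 → ℝ) → ℝ) (φ α : ℝ)
    (hu : ContDiffOn ℝ 2 u (closure (cyl ρ h)))
    (hbc : BC ρ h u φ α) :
    π * ρ ^ 2 * α ^ 2 / h ≤ ∫ x in cyl ρ h, (lapC ρ h u x) ^ 2 := by
  have hh0 : 0 < h := by linarith
  have hfc : ContinuousOn (lapC ρ h u) (closure (cyl ρ h)) := by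
    have h1 : ∀ i : Fin 3, ContinuousOn (pdC ρ h i (pdC ρ h i u)) (closure (cyl ρ h)) :=
      fun i => LapAux.continuousOn_pdC hρ hh0 (LapAux.contDiffOn_pdC hρ hh0 hu i) i
    have h2 : ContinuousOn (fun x => ∑ i : Fin 3, pdC ρ h i (pdC ρ h i u) x)
        (closure (cyl ρ h)) := by
      refine continuousOn_finset_sum _ fun i _ => h1 i
    exact h2
  have hint : IntegrableOn (lapC ρ h u) (cyl ρ h) := LapAux.integrableOn_cyl hρ hh0 hfc
  have hint2 : IntegrableOn (fun x => (lapC ρ h u x) ^ 2) (cyl ρ h) :=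
    LapAux.integrableOn_cyl hρ hh0 (hfc.pow 2)
  have hI : ∫ x in cyl ρ h, lapC ρ h u x = α * (π * ρ ^ 2) :=
    LapAux.integral_lapC hρ hh0 hu hbc
  have hV : (volume (cyl ρ h)).toReal = π * ρ ^ 2 * h := LapAux.volume_cyl hρ hh0
  have hvol_fin : volume (cyl ρ h) < ⊤ :=
    lt_of_le_of_lt (measure_mono subset_closure)
      (LapAux.compact_K hρ hh0).measure_lt_top
  set m : ℝ := α / h with hm
  have h0 : (0:ℝ) ≤ ∫ x in cyl ρ h, (lapC ρ h u x - m) ^ 2 :=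
    integral_nonneg fun x => sq_nonneg _
  have hconst : IntegrableOn (fun _ : Fin 3 → ℝ => m ^ 2) (cyl ρ h) := by
    refine integrableOn_const hvol_fin.ne
  have hsplit : ∫ x in cyl ρ h, (lapC ρ h u x - m) ^ 2 =
      (∫ x in cyl ρ h, (lapC ρ h u x) ^ 2) - (2 * m) * (∫ x in cyl ρ h, lapC ρ h u x)
        + (volume (cyl ρ h)).toReal * m ^ 2 := by
    have e1 : ∀ x : Fin 3 → ℝ, (lapC ρ h u x - m) ^ 2 =
        ((lapC ρ h u x) ^ 2 - (2 * m) * lapC ρ h u x) + m ^ 2 := fun x => by ring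
    rw [setIntegral_congr_fun (LapAux.isOpen_cyl ρ h).measurableSet fun x _ => e1 x]
    have hsub : IntegrableOn (fun x => (lapC ρ h u x) ^ 2 - (2 * m) * lapC ρ h u x)
        (cyl ρ h) := hint2.sub (hint.const_mul (2 * m))
    rw [integral_add hsub hconst]
    rw [integral_sub hint2 (hint.const_mul (2 * m))]
    rw [integral_const_mul, setIntegral_const, measureReal_def, smul_eq_mul]
  have hπ : 0 < π := Real.pi_pos
  have hexp2 : π * ρ ^ 2 * α ^ 2 / h =
      (2 * m) * (α * (π * ρ ^ 2)) - (π * ρ ^ 2 * h) * m ^ 2 := by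
    rw [hm]
    field_simp
    ring
  rw [hsplit, hI, hV] at h0
  linarith
end
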